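/- arXiv:math/0101197 — 4 statements merged into one kernel-verified Lean document; each statement's English description precedes it below -/
import Mathlib

section
/- Let r ≥ 1, let s_1,…,s_r be positive integers and let t_1,…,t_r be positive reals. Then there is a constant C (depending only on s_1,…,s_r,t_1,…,t_r) such that for all sufficiently large n, the size Ramsey number satisfies r̂(K_{s_1,⌊t_1·n⌋},…,K_{s_r,⌊t_r·n⌋}) ≤ C·n. In fact, with s = max_i s_i, t = max_i t_i, v_1 = (s−1)r+1 and v_2 = ⌈r·t·n·C(v_1,s)⌉, the graph K_{v_1,v_2} arrows (K_{s,⌊t·n⌋},…,K_{s,⌊t·n⌋}) (r entries). -/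
open Finset Filter

/-! ### Graph-side definitions -/

/-- `G` arrows the tuple `F` of graphs: for every `r`-colouring of the (pairs of vertices of) `G`
there are a colour `i` and a copy of `F i` in `G` all of whose edges have colour `i`. -/
def GArrows {U : Type*} (G : SimpleGraph U) {r : ℕ} {W : Fin r → Type*}
    (F : ∀ i, SimpleGraph (W i)) : Prop :=
  ∀ c : Sym2 U → Fin r, ∃ (i : Fin r) (φ : W i ↪ U),
    ∀ a b, (F i).Adj a b → G.Adj (φ a) (φ b) ∧ c s(φ a, φ b) = i

/-- The size Ramsey number of the tuple of complete bipartite graphs `K_{s i, τ i}`: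
the least number of edges of a (finite-size) graph arrowing the tuple. -/
noncomputable def sizeRamseyK (r : ℕ) (s τ : Fin r → ℕ) : ℕ :=
  sInf {m : ℕ | ∃ (U : Type) (G : SimpleGraph U), G.edgeSet.Finite ∧
    GArrows G (fun i : Fin r => completeBipartiteGraph (Fin (s i)) (Fin (τ i))) ∧
    G.edgeSet.ncard = m}

/-- Two-graph arrowing `G → (F₁, F₂)`. -/
def GArrows2 {U W1 W2 : Type*} (G : SimpleGraph U)
    (F1 : SimpleGraph W1) (F2 : SimpleGraph W2) : Prop :=
  ∀ c : Sym2 U → Fin 2,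
    (∃ φ : W1 ↪ U, ∀ a b, F1.Adj a b → G.Adj (φ a) (φ b) ∧ c s(φ a, φ b) = 0) ∨
    (∃ φ : W2 ↪ U, ∀ a b, F2.Adj a b → G.Adj (φ a) (φ b) ∧ c s(φ a, φ b) = 1)

/-- The size Ramsey number `r̂(F₁,F₂)`. -/
noncomputable def sizeRamsey2 {W1 W2 : Type*} (F1 : SimpleGraph W1) (F2 : SimpleGraph W2) : ℕ :=
  sInf {m : ℕ | ∃ (U : Type) (G : SimpleGraph U), G.edgeSet.Finite ∧
    GArrows2 G F1 F2 ∧ G.edgeSet.ncard = m}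

/-- `F` is isomorphic to a subgraph of `G`. -/
def IsSubgraphOf {U U' : Type*} (F : SimpleGraph U) (G : SimpleGraph U') : Prop :=
  ∃ φ : U ↪ U', ∀ a b, F.Adj a b → G.Adj (φ a) (φ b)

/-- The bipartite graph on `α ⊕ β` determined by the relation `E`. -/
def bipAdj {α β : Type*} (E : α → β → Prop) : SimpleGraph (α ⊕ β) where
  Adj x y := (∃ a b, x = Sum.inl a ∧ y = Sum.inr b ∧ E a b) ∨
             (∃ a b, x = Sum.inr b ∧ y = Sum.inl a ∧ E a b)
  symm := by
    constructor
    rintro x y (⟨a, b, rfl, rfl, h⟩ | ⟨a, b, rfl, rfl, h⟩)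
    · exact Or.inr ⟨a, b, rfl, rfl, h⟩
    · exact Or.inl ⟨a, b, rfl, rfl, h⟩
  loopless := by
    constructor
    rintro x (⟨a, b, rfl, h, _⟩ | ⟨a, b, rfl, h, _⟩) <;> simp at h

/-! ### Weights -/

section Weights

variable {V : Type*} [Fintype V] [DecidableEq V]

/-- A weight consists of non-negative values indexed by the subsets of a finite set. -/
def IsWeight (f : Finset V → ℝ) : Prop := ∀ A, 0 ≤ f A

/-- The size `e(f)` of a weight. -/
noncomputable def wsize (f : Finset V → ℝ) : ℝ := ∑ A : Finset V, f A * A.card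

/-- The degree of a vertex in a weight. -/
noncomputable def wdeg (f : Finset V → ℝ) (x : V) : ℝ :=
  ∑ A : Finset V, if x ∈ A then f A else 0

/-- The tuple `P` consists of pairwise disjoint sets. -/
def PairDisj {r : ℕ} (P : Fin r → Finset V) : Prop :=
  ∀ i j : Fin r, i ≠ j → Disjoint (P i) (P j)

open Classical in
/-- `c` is an `r`-colouring of the weight `g`: a family of non-negative reals indexed by
`r`-tuples of pairwise disjoint subsets such that for every `A` the total `c`-mass of the
tuples partitioning `A` exceeds `g A`. -/
def IsColouring {r : ℕ} (g : Finset V → ℝ) (c : (Fin r → Finset V) → ℝ) : Prop :=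
  (∀ P, 0 ≤ c P) ∧ (∀ P, ¬ PairDisj P → c P = 0) ∧
  ∀ A : Finset V,
    g A < ∑ P : Fin r → Finset V,
      if PairDisj P ∧ Finset.univ.biUnion P = A then c P else 0

open Classical in
/-- The `i`-th colour subweight of the colouring `c`. -/
noncomputable def subw {r : ℕ} (c : (Fin r → Finset V) → ℝ) (i : Fin r) :
    Finset V → ℝ :=
  fun A => ∑ P : Fin r → Finset V, if PairDisj P ∧ P i = A then c P else 0

end Weights

/-- `F ⊂ f` for a graph `F` and a weight `f`: for some bipartition of `F` (given by the
class `S` and its complement) there is an injection `h` of `S` into the vertex set of `f`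
such that the image of the neighbourhood of every vertex outside `S` is contained in some
set of positive weight. -/
def GraphSubW {U V : Type*} [Fintype V] [DecidableEq V]
    (F : SimpleGraph U) (f : Finset V → ℝ) : Prop :=
  ∃ (S : Set U) (h : U → V),
    (∀ a b, F.Adj a b → (a ∈ S ↔ b ∉ S)) ∧
    Set.InjOn h S ∧
    ∀ y, y ∉ S → ∃ B : Finset V, 0 < f B ∧ ∀ x ∈ S, F.Adj x y → h x ∈ B

/-- The weight `g` extended by new vertices (a copy of `V`); the extension vanishes on
every set containing a new vertex. -/
noncomputable def wext {W : Type*} [Fintype W] [DecidableEq W]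
    (g : Finset W → ℝ) (V : Type*) [Fintype V] [DecidableEq V] :
    Finset (W ⊕ V) → ℝ := fun B =>
  if _h : ∀ b ∈ B, b.isLeft = true then
    g (B.preimage Sum.inl Sum.inl_injective.injOn)
  else 0

/-- Fractional containment of weights (without enlarging the target). -/
def WeightSubRaw {V W : Type*} [Fintype V] [DecidableEq V] [Fintype W] [DecidableEq W]
    (f : Finset V → ℝ) (g : Finset W → ℝ) : Prop :=
  ∃ (h : V ↪ W) (w : Finset V → Finset W → ℝ),
    (∀ A B, 0 ≤ w A B) ∧
    (∀ A B, ¬ A.map h ⊆ B → w A B = 0) ∧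
    (∀ A, f A ≤ ∑ B : Finset W, if A.map h ⊆ B then w A B else 0) ∧
    (∀ B, (∑ A : Finset V, if A.map h ⊆ B then w A B else 0) ≤ g B)

/-- `f ⊂ g` for weights: fractional containment of `f` in `g`, where `g` is first
enlarged by new vertices (carrying zero weight) so that `v(f) ≤ v(g)`. -/
def WeightSub {V W : Type*} [Fintype V] [DecidableEq V] [Fintype W] [DecidableEq W]
    (f : Finset V → ℝ) (g : Finset W → ℝ) : Prop :=
  WeightSubRaw f (wext g V)

/-! ### Dilatations -/

/-- `F^A`: the set of vertices of the second class whose neighbourhood is exactly `A`. -/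
def fiber {V β : Type*} (E : V → β → Prop) (A : Finset V) : Set β :=
  {y | ∀ x, E x y ↔ x ∈ A}

/-- The sequence of bipartite graphs (with first class `V` and second classes `W n`,
edge relations `E n`) is a dilatation of the weight `f`: each member agrees with `f`
and `|Fₙ^A| = f A · n + o(n)` for every `A ⊆ V`. -/
def Dilatation {V : Type*} [Fintype V] [DecidableEq V] (f : Finset V → ℝ)
    (W : ℕ → Type) (E : ∀ n, V → W n → Prop) : Prop :=
  (∀ n A, fiber (E n) A = ∅ ↔ f A = 0) ∧
  ∀ A, Tendsto (fun n : ℕ => ((fiber (E n) A).ncard : ℝ) / n) atTop (nhds (f A))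

/-! ### Arrowing for weights -/

/-- The weight `g` arrows the tuple `(f₁,…,f_q, F_{q+1},…,F_r)` (weights `f i`, bipartite
graphs given by the relations `E j`): every `r`-colouring of `g` contains some `f i` in its
`i`-th colour subweight or some `F j` in the corresponding colour subweight. -/
def WArrows (r q : ℕ) (hqr : q ≤ r)
    (Vf : Fin q → Type) [∀ i, Fintype (Vf i)] [∀ i, DecidableEq (Vf i)]
    (f : ∀ i, Finset (Vf i) → ℝ)
    (α β : Fin (r - q) → Type)
    (E : ∀ j, α j → β j → Prop)
    (V : Type) [Fintype V] [DecidableEq V] (g : Finset V → ℝ) : Prop :=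
  ∀ c : (Fin r → Finset V) → ℝ, IsColouring g c →
    (∃ i : Fin q, WeightSub (f i) (subw c (Fin.castLE hqr i))) ∨
    (∃ j : Fin (r - q), GraphSubW (bipAdj (E j))
      (subw c ⟨q + (j : ℕ), by have := j.isLt; omega⟩))

/-- `r̂(F)` for a tuple of weights and bipartite graphs: the infimum of the sizes of the
arrowing weights. -/
noncomputable def rhatW (r q : ℕ) (hqr : q ≤ r)
    (Vf : Fin q → Type) [∀ i, Fintype (Vf i)] [∀ i, DecidableEq (Vf i)]
    (f : ∀ i, Finset (Vf i) → ℝ)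
    (α β : Fin (r - q) → Type)
    (E : ∀ j, α j → β j → Prop) : ℝ :=
  sInf {x : ℝ | ∃ (V : Type) (_ : Fintype V) (_ : DecidableEq V) (g : Finset V → ℝ),
    IsWeight g ∧ WArrows r q hqr Vf f α β E V g ∧ x = wsize g}

/-- Graph arrowing for a mixed tuple of bipartite graphs: the first `q` coordinates are the
bipartite graphs given by `Ed`, the last `r - q` those given by `E`. -/
def GArrowsMix (r q : ℕ) (hqr : q ≤ r)
    {W1 W2 : Fin q → Type} (Ed : ∀ i, W1 i → W2 i → Prop)
    {α β : Fin (r - q) → Type} (E : ∀ j, α j → β j → Prop)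
    {U : Type} (G : SimpleGraph U) : Prop :=
  ∀ c : Sym2 U → Fin r,
    (∃ (i : Fin q) (φ : (W1 i ⊕ W2 i) ↪ U),
      ∀ a b, (bipAdj (Ed i)).Adj a b →
        G.Adj (φ a) (φ b) ∧ c s(φ a, φ b) = Fin.castLE hqr i) ∨
    (∃ (j : Fin (r - q)) (φ : (α j ⊕ β j) ↪ U),
      ∀ a b, (bipAdj (E j)).Adj a b →
        G.Adj (φ a) (φ b) ∧ c s(φ a, φ b) = ⟨q + (j : ℕ), by have := j.isLt; omega⟩)

/-- The size Ramsey number of a mixed tuple of bipartite graphs. -/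
noncomputable def sizeRamseyMix (r q : ℕ) (hqr : q ≤ r)
    {W1 W2 : Fin q → Type} (Ed : ∀ i, W1 i → W2 i → Prop)
    {α β : Fin (r - q) → Type} (E : ∀ j, α j → β j → Prop) : ℕ :=
  sInf {m : ℕ | ∃ (U : Type) (G : SimpleGraph U), G.edgeSet.Finite ∧
    GArrowsMix r q hqr Ed E G ∧ G.edgeSet.ncard = m}

/-- The weight `k_{s,t}` on `{1,…,s}`, with value `t` on the full set and `0` elsewhere. -/
noncomputable def kst (s : ℕ) (t : ℝ) : Finset (Fin s) → ℝ :=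
  fun A => if A = Finset.univ then t else 0

/-- `Π_s`: tuples `a` of non-negative integers with `a i = s i - 1` for `i > q` and
`∑ a i = sv`. -/
def PiS (r q : ℕ) (s : Fin r → ℕ) (sv : ℕ) : Finset (Fin r → ℕ) :=
  (Fintype.piFinset fun _ : Fin r => Finset.range (sv + 1)).filter
    (fun a => (∀ i : Fin r, q ≤ (i : ℕ) → a i = s i - 1) ∧ ∑ i, a i = sv)

/-- `sol(L_s)`: the optimal value of the linear program `L_s`. -/
noncomputable def solL (r q : ℕ) (hqr : q ≤ r) (s : Fin r → ℕ) (t : Fin q → ℝ)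
    (sv : ℕ) : ℝ :=
  sSup {x : ℝ | ∃ w : (Fin r → ℕ) → ℝ, (∀ a, 0 ≤ w a) ∧
    (∀ i : Fin q, ∑ a ∈ PiS r q s sv,
        w a * ((a (Fin.castLE hqr i)).choose (s (Fin.castLE hqr i)) : ℝ)
      ≤ t i * (sv.choose (s (Fin.castLE hqr i)) : ℝ)) ∧
    x = ∑ a ∈ PiS r q s sv, w a}


lemma arrows_KB (r s M v2 : ℕ) (hr : 1 ≤ r) (hs : 1 ≤ s) (hM : 1 ≤ M)
    (hv2 : r * (((s-1)*r+1).choose s) * (M-1) < v2) :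
    GArrows (completeBipartiteGraph (Fin ((s-1)*r+1)) (Fin v2))
      (fun _ : Fin r => completeBipartiteGraph (Fin s) (Fin M)) := by
  intro c
  have step1 : ∀ y : Fin v2, ∃ (i : Fin r) (A : Finset (Fin ((s-1)*r+1))),
      A.card = s ∧ ∀ x ∈ A, c s(Sum.inl x, Sum.inr y) = i := by
    intro y
    have hcard : Fintype.card (Fin r) * (s-1) < Fintype.card (Fin ((s-1)*r+1)) := by
      simp only [Fintype.card_fin]
      nlinarith
    obtain ⟨i, hi⟩ := Fintype.exists_lt_card_fiber_of_mul_lt_card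
      (f := fun x : Fin ((s-1)*r+1) => c s(Sum.inl x, Sum.inr y)) hcard
    have hsle : s ≤ #(filter (fun x => c s(Sum.inl x, Sum.inr y) = i) univ) := by omega
    obtain ⟨A, hAsub, hAcard⟩ := Finset.exists_subset_card_eq hsle
    exact ⟨i, A, hAcard, fun x hx => (Finset.mem_filter.1 (hAsub hx)).2⟩
  choose I A hAcard hAcol using step1
  have hmaps : ∀ y ∈ (univ : Finset (Fin v2)),
      (I y, A y) ∈ (univ : Finset (Fin r)) ×ˢ Finset.powersetCard s (univ : Finset (Fin ((s-1)*r+1))) := by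
    intro y _
    simp [Finset.mem_powersetCard_univ, hAcard]
  have hlt : #((univ : Finset (Fin r)) ×ˢ Finset.powersetCard s (univ : Finset (Fin ((s-1)*r+1))))
      * (M-1) < #(univ : Finset (Fin v2)) := by
    simpa [Finset.card_powersetCard] using hv2
  obtain ⟨⟨i, B⟩, hmem, hfib⟩ :=
    Finset.exists_lt_card_fiber_of_mul_lt_card_of_maps_to hmaps hlt
  have hBcard : B.card = s := by
    have := (Finset.mem_product.1 hmem).2
    exact Finset.mem_powersetCard_univ.1 this
  have hMle : M ≤ #(filter (fun y => (I y, A y) = (i, B)) univ) := by omega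
  obtain ⟨T, hTsub, hTcard⟩ := Finset.exists_subset_card_eq hMle
  have hT : ∀ y ∈ T, I y = i ∧ A y = B := by
    intro y hy
    have := (Finset.mem_filter.1 (hTsub hy)).2
    exact ⟨congrArg Prod.fst this, congrArg Prod.snd this⟩
  refine ⟨i, ((B.orderEmbOfFin hBcard).toEmbedding).sumMap
      ((T.orderEmbOfFin hTcard).toEmbedding), ?_⟩
  have key : ∀ (x : Fin s) (y : Fin M),
      c s(Sum.inl (B.orderEmbOfFin hBcard x), Sum.inr (T.orderEmbOfFin hTcard y)) = i := by
    intro x y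
    have hyT := T.orderEmbOfFin_mem hTcard y
    obtain ⟨hIy, hAy⟩ := hT _ hyT
    have hxB : B.orderEmbOfFin hBcard x ∈ A (T.orderEmbOfFin hTcard y) := by
      rw [hAy]; exact B.orderEmbOfFin_mem hBcard x
    rw [hAcol _ _ hxB, hIy]
  rintro (x | y) (x' | y') hadj <;>
    simp only [Function.Embedding.coe_sumMap, RelEmbedding.coe_toEmbedding, Function.comp, Sum.map_inl, Sum.map_inr,
      completeBipartiteGraph_adj] at hadj ⊢
  · simp at hadj
  · exact ⟨by simp, key x y'⟩
  · refine ⟨by simp, ?_⟩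
    rw [Sym2.eq_swap]
    exact key x' y
  · simp at hadj


lemma garrows_mono {r : ℕ} {U : Type*} (G : SimpleGraph U) (s M : ℕ) (s' m' : Fin r → ℕ)
    (hs : ∀ i, s' i ≤ s) (hm : ∀ i, m' i ≤ M)
    (h : GArrows G (fun _ : Fin r => completeBipartiteGraph (Fin s) (Fin M))) :
    GArrows G (fun i => completeBipartiteGraph (Fin (s' i)) (Fin (m' i))) := by
  intro c
  obtain ⟨i, φ, hφ⟩ := h c
  refine ⟨i, ((Fin.castLEEmb (hs i)).sumMap (Fin.castLEEmb (hm i))).trans φ,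
    fun a b hab => ?_⟩
  have hab' : (completeBipartiteGraph (Fin s) (Fin M)).Adj
      (Sum.map (Fin.castLE (hs i)) (Fin.castLE (hm i)) a)
      (Sum.map (Fin.castLE (hs i)) (Fin.castLE (hm i)) b) := by
    cases a <;> cases b <;> simp_all
  exact hφ _ _ hab'

lemma edge_bound (a b : ℕ) :
    (completeBipartiteGraph (Fin a) (Fin b)).edgeSet.ncard ≤ a * b := by
  have hsub : (completeBipartiteGraph (Fin a) (Fin b)).edgeSet ⊆
      (fun p : Fin a × Fin b => s(Sum.inl p.1, Sum.inr p.2)) '' Set.univ := by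
    intro e he
    induction e with
    | _ x y =>
      rw [SimpleGraph.mem_edgeSet] at he
      rcases x with x | x <;> rcases y with y | y <;> simp only [completeBipartiteGraph_adj,
        Sum.isLeft_inl, Sum.isRight_inr, Sum.isLeft_inr, Sum.isRight_inl] at he
      · simp at he
      · exact ⟨(x, y), trivial, rfl⟩
      · exact ⟨(y, x), trivial, by rw [Sym2.eq_swap]⟩
      · simp at he
  calc (completeBipartiteGraph (Fin a) (Fin b)).edgeSet.ncard
      ≤ ((fun p : Fin a × Fin b => s(Sum.inl p.1, Sum.inr p.2)) '' Set.univ).ncard :=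
        Set.ncard_le_ncard hsub (Set.toFinite _)
    _ ≤ (Set.univ : Set (Fin a × Fin b)).ncard := Set.ncard_image_le (Set.toFinite _)
    _ = a * b := by simp [Set.ncard_univ]

/-- With `s = max s_i`, `t = max t_i`, `v₁ = (s-1)r+1` and
`v₂ = ⌈r·t·n·C(v₁,s)⌉`, for all sufficiently large `n` we have
`r̂(K_{s₁,⌊t₁n⌋},…,K_{s_r,⌊t_r n⌋}) ≤ C·n`, and indeed `K_{v₁,v₂}` arrows the tuple of
`r` copies of `K_{s,⌊tn⌋}`. -/
theorem stmt_0 (r : ℕ) (hr : 1 ≤ r) (s : Fin r → ℕ) (t : Fin r → ℝ)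
    (hs : ∀ i, 0 < s i) (ht : ∀ i, 0 < t i) :
    ∃ C : ℝ, ∀ᶠ n : ℕ in atTop,
      (sizeRamseyK r s (fun i => ⌊t i * n⌋₊) : ℝ) ≤ C * n ∧
      GArrows (completeBipartiteGraph
          (Fin ((sSup (Set.range s) - 1) * r + 1))
          (Fin ⌈(r : ℝ) * sSup (Set.range t) * n *
            (((sSup (Set.range s) - 1) * r + 1).choose (sSup (Set.range s)))⌉₊))
        (fun _ : Fin r => completeBipartiteGraph (Fin (sSup (Set.range s)))
          (Fin ⌊sSup (Set.range t) * n⌋₊)) := by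
    classical
  set sM := sSup (Set.range s) with hsMdef
  set tM := sSup (Set.range t) with htMdef
  have hsle : ∀ i, s i ≤ sM := fun i => le_csSup (Set.finite_range s).bddAbove ⟨i, rfl⟩
  have htle : ∀ i, t i ≤ tM := fun i => le_csSup (Set.finite_range t).bddAbove ⟨i, rfl⟩
  have hsM1 : 1 ≤ sM := le_trans (hs ⟨0, hr⟩) (hsle ⟨0, hr⟩)
  have htM0 : 0 < tM := lt_of_lt_of_le (ht ⟨0, hr⟩) (htle ⟨0, hr⟩)
  set v1 := (sM - 1) * r + 1 with hv1def
  have hsMv1 : sM ≤ v1 := by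
    have : (sM - 1) * 1 ≤ (sM - 1) * r := Nat.mul_le_mul_left _ hr
    omega
  have hCb0 : (0 : ℝ) < ((v1.choose sM : ℕ) : ℝ) := by exact_mod_cast Nat.choose_pos hsMv1
  refine ⟨(v1 : ℝ) * ((r : ℝ) * tM * ((v1.choose sM : ℕ) : ℝ) + 1), ?_⟩
  filter_upwards [eventually_ge_atTop 1, eventually_ge_atTop ⌈1 / tM⌉₊] with n hn1 hn2
  have hnR : (1 : ℝ) ≤ n := by exact_mod_cast hn1
  have h1tn : (1 : ℝ) ≤ tM * n := by
    have h1 : 1 / tM ≤ (n : ℝ) := le_trans (Nat.le_ceil _) (by exact_mod_cast hn2)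
    rw [div_le_iff₀ htM0] at h1
    linarith [mul_comm tM (n : ℝ)]
  set M := ⌊tM * (n : ℕ)⌋₊ with hMdef
  have hM1 : 1 ≤ M := Nat.le_floor (by exact_mod_cast h1tn)
  have hMle : (M : ℝ) ≤ tM * n := Nat.floor_le (by positivity)
  set v2 := ⌈(r : ℝ) * tM * n * ((v1.choose sM : ℕ) : ℝ)⌉₊ with hv2def
  have hv2ge : (r : ℝ) * tM * n * ((v1.choose sM : ℕ) : ℝ) ≤ v2 := Nat.le_ceil _
  have hr0 : (0 : ℝ) < r := by exact_mod_cast hr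
  have hv2 : r * (v1.choose sM) * (M - 1) < v2 := by
    have hcast : ((r * (v1.choose sM) * (M - 1) : ℕ) : ℝ) < (v2 : ℝ) := by
      push_cast [Nat.cast_sub hM1]
      nlinarith [mul_le_mul_of_nonneg_left hMle (le_of_lt (mul_pos hr0 hCb0)),
        mul_pos hr0 hCb0]
    exact_mod_cast hcast
  have hGA : GArrows (completeBipartiteGraph (Fin v1) (Fin v2))
      (fun _ : Fin r => completeBipartiteGraph (Fin sM) (Fin M)) :=
    arrows_KB r sM M v2 hr hsM1 hM1 hv2
  refine ⟨?_, hGA⟩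
  have h1 : GArrows (completeBipartiteGraph (Fin v1) (Fin v2))
      (fun i => completeBipartiteGraph (Fin (s i)) (Fin ⌊t i * n⌋₊)) := by
    refine garrows_mono _ sM M _ _ hsle (fun i => ?_) hGA
    exact Nat.floor_le_floor (mul_le_mul_of_nonneg_right (htle i) (Nat.cast_nonneg n))
  have h2 : sizeRamseyK r s (fun i => ⌊t i * n⌋₊) ≤ v1 * v2 := by
    refine le_trans (Nat.sInf_le ?_) (edge_bound v1 v2)
    exact ⟨Fin v1 ⊕ Fin v2, completeBipartiteGraph (Fin v1) (Fin v2),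
      Set.toFinite _, h1, rfl⟩
  have h3 : (sizeRamseyK r s (fun i => ⌊t i * n⌋₊) : ℝ) ≤ (v1 : ℝ) * v2 := by
    exact_mod_cast Nat.cast_le.2 h2
  have hv2le : (v2 : ℝ) ≤ (r : ℝ) * tM * n * ((v1.choose sM : ℕ) : ℝ) + 1 :=
    le_of_lt (Nat.ceil_lt_add_one (by positivity))
  have hv10 : (0 : ℝ) ≤ v1 := Nat.cast_nonneg _
  calc (sizeRamseyK r s (fun i => ⌊t i * n⌋₊) : ℝ)
      ≤ (v1 : ℝ) * v2 := h3
    _ ≤ (v1 : ℝ) * ((r : ℝ) * tM * n * ((v1.choose sM : ℕ) : ℝ) + 1) :=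
        mul_le_mul_of_nonneg_left hv2le hv10
    _ ≤ (v1 : ℝ) * (((r : ℝ) * tM * ((v1.choose sM : ℕ) : ℝ) + 1) * n) := by
        refine mul_le_mul_of_nonneg_left ?_ hv10
        nlinarith
    _ = (v1 : ℝ) * ((r : ℝ) * tM * ((v1.choose sM : ℕ) : ℝ) + 1) * n := by ring
end

section
/- Let r ≥ 2 and q ≥ 1, let t_1,…,t_q be positive reals and s_1,…,s_r, t_{q+1},…,t_r be positive integers with t_i ≥ s_i for i ∈ {q+1,…,r}, and set F = (k_{s_1,t_1},…,k_{s_q,t_q},K_{s_{q+1},t_{q+1}},…,K_{s_r,t_r}) and σ = Σ_{i=1}^r (s_i − 1). Then every weight g with g → F has more than σ vertices of positive degree. -/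
open Finset Filter

lemma sigma_fin_ext {r : ℕ} {s : Fin r → ℕ} {p q : Σ k : Fin r, Fin (s k - 1)}
    (h1 : p.1 = q.1) (h2 : (p.2 : ℕ) = (q.2 : ℕ)) : p = q := by
  obtain ⟨k, v⟩ := p; obtain ⟨k', v'⟩ := q
  dsimp at h1; subst h1
  simp only [Sigma.mk.inj_iff, heq_eq_eq, true_and]
  exact Fin.ext h2

/-- With `σ = Σ_{i=1}^r (s_i − 1)`, every weight arrowing
`F = (k_{s₁,t₁},…,k_{s_q,t_q},K_{s_{q+1},t_{q+1}},…,K_{s_r,t_r})` has more than `σ`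
vertices of positive degree. -/
theorem stmt_9 (r q : ℕ) (hr : 2 ≤ r) (hq : 1 ≤ q) (hqr : q ≤ r)
    (s : Fin r → ℕ) (t : Fin q → ℝ) (tN : Fin (r - q) → ℕ)
    (hs : ∀ i, 0 < s i) (ht : ∀ i, 0 < t i)
    (htN : ∀ j : Fin (r - q),
      s (Fin.cast (Nat.add_sub_cancel' hqr) (Fin.natAdd q j)) ≤ tN j)
    (V : Type) [Fintype V] [DecidableEq V] (g : Finset V → ℝ) (hg : IsWeight g)
    (harr : WArrows r q hqr (fun i => Fin (s (Fin.castLE hqr i)))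
      (fun i => kst (s (Fin.castLE hqr i)) (t i))
      (fun j => Fin (s (Fin.cast (Nat.add_sub_cancel' hqr) (Fin.natAdd q j))))
      (fun j => Fin (tN j)) (fun _ _ _ => True) V g) :
    (∑ i : Fin r, (s i - 1)) < {x : V | 0 < wdeg g x}.ncard := by
  classical
  by_contra hcon
  push_neg at hcon
  set Sf : Finset V := Finset.univ.filter (fun x => 0 < wdeg g x) with hSfdef
  have hSfset : {x : V | 0 < wdeg g x} = ↑Sf := by ext x; simp [hSfdef]
  rw [hSfset, Set.ncard_coe_finset] at hcon
  have hgz : ∀ A : Finset V, ¬ A ⊆ Sf → g A = 0 := by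
    intro A hA
    obtain ⟨x, hxA, hxS⟩ := Finset.not_subset.1 hA
    have hx0 : wdeg g x ≤ 0 := by
      by_contra hlt
      push_neg at hlt
      exact hxS (by simp [hSfdef, hlt])
    have hle : g A ≤ wdeg g x := by
      unfold wdeg
      have := Finset.single_le_sum (f := fun B : Finset V => if x ∈ B then g B else 0)
        (fun B _ => by split_ifs; exacts [hg B, le_refl 0]) (Finset.mem_univ A)
      simpa [hxA] using this
    exact le_antisymm (hle.trans hx0) (hg A)
  have hcards : Fintype.card Sf ≤ Fintype.card (Σ k : Fin r, Fin (s k - 1)) := by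
    simpa [Fintype.card_coe] using hcon
  obtain ⟨e⟩ := Function.Embedding.nonempty_of_card_le hcards
  have z0 : (0 : ℕ) < r := by omega
  set z : Fin r := ⟨0, z0⟩ with hzdef
  set ψ : V → Fin r := fun x => if hx : x ∈ Sf then (e ⟨x, hx⟩).1 else z with hψdef
  set X : Fin r → Finset V := fun i => Sf.filter (fun x => ψ x = i) with hXdef
  have hXsub : ∀ i, X i ⊆ Sf := fun i => Finset.filter_subset _ _
  have hXdisj : ∀ i j, i ≠ j → Disjoint (X i) (X j) := by
    intro i j hij
    rw [Finset.disjoint_left]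
    intro a hai haj
    simp only [hXdef, Finset.mem_filter] at hai haj
    exact hij (by rw [← hai.2, haj.2])
  have hmemX : ∀ x ∈ Sf, x ∈ X (ψ x) := by intro x hx; simp [hXdef, hx]
  have hXcard : ∀ i, (X i).card ≤ s i - 1 := by
    intro i
    have h1 : ∀ x : {y // y ∈ X i}, x.1 ∈ Sf := fun x => hXsub i x.2
    have h2 : ∀ x : {y // y ∈ X i}, (e ⟨x.1, h1 x⟩).1 = i := by
      intro x
      have hx2 : ψ x.1 = i := (Finset.mem_filter.1 x.2).2
      simp only [hψdef] at hx2
      rwa [dif_pos (h1 x)] at hx2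
    rw [← Fintype.card_coe, ← Fintype.card_fin (s i - 1)]
    refine Fintype.card_le_of_injective
      (fun x => ⟨((e ⟨x.1, h1 x⟩).2 : ℕ), by
        have hlt := (e ⟨x.1, h1 x⟩).2.isLt
        exact lt_of_lt_of_le hlt (le_of_eq (by rw [h2 x]))⟩) ?_
    intro x y hxy
    have hval : ((e ⟨x.1, h1 x⟩).2 : ℕ) = ((e ⟨y.1, h1 y⟩).2 : ℕ) := by
      simpa using congrArg Fin.val hxy
    have hee : e ⟨x.1, h1 x⟩ = e ⟨y.1, h1 y⟩ :=
      sigma_fin_ext ((h2 x).trans (h2 y).symm) hval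
    have h3 := e.injective hee
    simp only [Subtype.mk.injEq] at h3
    exact Subtype.ext h3
  haveI : Nonempty (Fin q) := ⟨⟨0, hq⟩⟩
  set N : ℕ := 2 ^ (Fintype.card V + ∑ k, s k) with hNdef
  set tmin : ℝ := Finset.univ.inf' Finset.univ_nonempty t with htmindef
  have htle : ∀ i : Fin q, tmin ≤ t i := fun i => Finset.inf'_le _ (Finset.mem_univ i)
  have htminpos : 0 < tmin := by
    rw [htmindef, Finset.lt_inf'_iff]
    intro i _
    exact ht i
  set ε : ℝ := tmin / (N + 1) with hεdef
  have hε0 : 0 < ε := by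
    apply div_pos htminpos
    positivity
  have hεN : (N : ℝ) * ε < tmin := by
    have h1 : ((N : ℝ) + 1) ≠ 0 := by positivity
    have h2 : ε * ((N : ℝ) + 1) = tmin := div_mul_cancel₀ _ h1
    nlinarith [hε0]
  set Df : Finset V → (Fin r → Finset V) := fun A k => if k = z then A else ∅ with hDfdef
  set c : (Fin r → Finset V) → ℝ := fun P =>
    if (∀ k, P k = Finset.univ.biUnion P ∩ X k) then g (Finset.univ.biUnion P) + ε
    else if (P z = Finset.univ.biUnion P ∧ ∀ k, k ≠ z → P k = ∅) then ε else 0 with hcdef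
  have hc0 : ∀ P, 0 ≤ c P := by
    intro P
    simp only [hcdef]
    split_ifs
    · have := hg (Finset.univ.biUnion P); linarith
    · exact hε0.le
    · exact le_refl 0
  have hBUDf : ∀ A : Finset V, Finset.univ.biUnion (Df A) = A := by
    intro A
    apply Finset.ext
    intro x
    simp only [hDfdef, Finset.mem_biUnion, Finset.mem_univ, true_and]
    constructor
    · rintro ⟨k, hk⟩
      split_ifs at hk with hkk
      · exact hk
      · simp at hk
    · intro hx
      exact ⟨z, by simp [hx]⟩
  have hDfdisj : ∀ A, PairDisj (Df A) := by
    intro A i j hij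
    rcases eq_or_ne i z with rfl | hi
    · have hj : Df A j = ∅ := by simp only [hDfdef]; rw [if_neg (Ne.symm hij)]
      rw [hj]; exact Finset.disjoint_empty_right _
    · have hi' : Df A i = ∅ := by simp only [hDfdef]; rw [if_neg hi]
      rw [hi']; exact Finset.disjoint_empty_left _
  have hTdisj : ∀ A : Finset V, PairDisj (fun k => A ∩ X k) :=
    fun A i j hij => (hXdisj i j hij).mono Finset.inter_subset_right Finset.inter_subset_right
  have hTunion : ∀ A : Finset V, A ⊆ Sf → Finset.univ.biUnion (fun k => A ∩ X k) = A := by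
    intro A hA
    apply Finset.ext
    intro x
    simp only [Finset.mem_biUnion, Finset.mem_univ, true_and, Finset.mem_inter]
    constructor
    · rintro ⟨k, hk, _⟩; exact hk
    · intro hx; exact ⟨ψ x, hx, hmemX x (hA hx)⟩
  have hc : IsColouring g c := by
    refine ⟨hc0, ?_, ?_⟩
    · intro P hP
      by_contra hne
      apply hP
      simp only [hcdef] at hne
      split_ifs at hne with hb1 hb2
      · intro i j hij
        rw [hb1 i, hb1 j]
        exact (hXdisj i j hij).mono Finset.inter_subset_right Finset.inter_subset_right
      · intro i j hij
        rcases eq_or_ne i z with rfl | hi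
        · rw [hb2.2 j (Ne.symm hij)]; exact Finset.disjoint_empty_right _
        · rw [hb2.2 i hi]; exact Finset.disjoint_empty_left _
      · exact absurd rfl hne
    · intro A
      by_cases hA : A ⊆ Sf
      · have hT : c (fun k => A ∩ X k) = g A + ε := by
          simp only [hcdef]
          rw [hTunion A hA, if_pos (fun k => rfl)]
        calc g A < g A + ε := by linarith
        _ = c (fun k => A ∩ X k) := hT.symm
        _ ≤ ∑ P : Fin r → Finset V,
              if PairDisj P ∧ Finset.univ.biUnion P = A then c P else 0 := by
            have := Finset.single_le_sum
              (f := fun P : Fin r → Finset V =>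
                if PairDisj P ∧ Finset.univ.biUnion P = A then c P else 0)
              (fun P _ => by split_ifs; exacts [hc0 P, le_refl 0])
              (Finset.mem_univ (fun k => A ∩ X k))
            rwa [if_pos ⟨hTdisj A, hTunion A hA⟩] at this
      · have hgA : g A = 0 := hgz A hA
        have hcD : c (Df A) = ε := by
          simp only [hcdef]
          rw [hBUDf A, if_neg, if_pos]
          · refine ⟨by simp [hDfdef], fun k hk => by simp only [hDfdef]; rw [if_neg hk]⟩
          · intro hb1
            obtain ⟨x, hxA, hxS⟩ := Finset.not_subset.1 hA
            have hx : x ∈ A ∩ X z := by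
              rw [← hb1 z]
              simp [hDfdef, hxA]
            exact hxS (hXsub z (Finset.mem_inter.1 hx).2)
        calc g A = 0 := hgA
        _ < ε := hε0
        _ = c (Df A) := hcD.symm
        _ ≤ ∑ P : Fin r → Finset V,
              if PairDisj P ∧ Finset.univ.biUnion P = A then c P else 0 := by
            have := Finset.single_le_sum
              (f := fun P : Fin r → Finset V =>
                if PairDisj P ∧ Finset.univ.biUnion P = A then c P else 0)
              (fun P _ => by split_ifs; exacts [hc0 P, le_refl 0])
              (Finset.mem_univ (Df A))
            rwa [if_pos ⟨hDfdisj A, hBUDf A⟩] at this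
  have hsubw : ∀ (i' : Fin r) (B' : Finset V), s i' ≤ B'.card →
      subw c i' B' ≤ (if i' = z then ε else 0) := by
    intro i' B' hcB
    have hB'ne : B' ≠ ∅ := by
      intro hh
      rw [hh] at hcB
      simp only [Finset.card_empty, Nat.le_zero] at hcB
      have := hs i'
      omega
    have hterm : ∀ P : Fin r → Finset V,
        (if PairDisj P ∧ P i' = B' then c P else 0) ≤
          (if P = Df B' ∧ i' = z then ε else 0) := by
      intro P
      split_ifs with h1 h2 h2
      · simp only [hcdef]
        split_ifs with hb1 hb2
        · exfalso
          have hsub : B' ⊆ X i' := by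
            rw [← h1.2, hb1 i']
            exact Finset.inter_subset_right
          have hc1 := Finset.card_le_card hsub
          have hc2 := hXcard i'
          have hc3 := hs i'
          omega
        · exact le_refl ε
        · exact hε0.le
      · simp only [hcdef]
        split_ifs with hb1 hb2
        · exfalso
          have hsub : B' ⊆ X i' := by
            rw [← h1.2, hb1 i']
            exact Finset.inter_subset_right
          have hc1 := Finset.card_le_card hsub
          have hc2 := hXcard i'
          have hc3 := hs i'
          omega
        · exfalso
          apply h2
          have hiz : i' = z := by
            by_contra hne
            have hPe : P i' = ∅ := hb2.2 i' hne
            rw [h1.2] at hPe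
            exact hB'ne hPe
          refine ⟨?_, hiz⟩
          funext k
          rcases eq_or_ne k z with rfl | hk
          · have hPz : P z = B' := by rw [← hiz]; exact h1.2
            simpa [hDfdef] using hPz
          · simpa [hDfdef, hk] using hb2.2 k hk
        · exact le_refl 0
      · exact hε0.le
      · exact le_refl 0
    have hsum : subw c i' B' ≤ ∑ P : Fin r → Finset V,
        if P = Df B' ∧ i' = z then ε else 0 :=
      Finset.sum_le_sum (fun P _ => hterm P)
    refine hsum.trans ?_
    rcases eq_or_ne i' z with rfl | hne
    · simp only [and_true]
      rw [Finset.sum_ite_eq' Finset.univ (Df B') (fun _ => ε)]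
      simp
    · simp [hne]
  rcases harr c hc with ⟨i, hWS⟩ | ⟨j, hGS⟩
  · set i' : Fin r := Fin.castLE hqr i with hi'def
    obtain ⟨h, w, hw0, hwz, hlo, hup⟩ := hWS
    have hkey : ∀ B : Finset (V ⊕ Fin (s i')),
        Finset.univ.map h ⊆ B → wext (subw c i') (Fin (s i')) B ≤ ε := by
      intro B hBs
      unfold wext
      split_ifs with hleft
      · have hmem : ∀ a : Fin (s i'), h a ∈ B :=
          fun a => hBs (Finset.mem_map_of_mem h (Finset.mem_univ a))
      
        have hchoice : ∀ a : Fin (s i'), ∃ v : V, h a = Sum.inl v := by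
          intro a
          have hL := hleft (h a) (hmem a)
          cases hha : h a with
          | inl v => exact ⟨v, rfl⟩
          | inr v => rw [hha] at hL; simp at hL
        choose v hv using hchoice
        have hvmem : ∀ a, v a ∈ B.preimage Sum.inl Sum.inl_injective.injOn := by
          intro a
          rw [Finset.mem_preimage, ← hv a]
          exact hmem a
        have hvinj : Function.Injective v := by
          intro a b hab
          apply h.injective
          rw [hv a, hv b, hab]
        have hcard : s i' ≤ (B.preimage Sum.inl Sum.inl_injective.injOn).card := by
          calc s i' = (Finset.univ : Finset (Fin (s i'))).card := by simp
          _ ≤ _ := Finset.card_le_card_of_injOn v (fun a _ => hvmem a) hvinj.injOn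
        have hss := hsubw i' _ hcard
        split_ifs at hss with hzz
        · exact hss
        · exact hss.trans hε0.le
      · exact hε0.le
    have hchain : t i ≤ ∑ B : Finset (V ⊕ Fin (s i')),
        if Finset.univ.map h ⊆ B then w Finset.univ B else 0 := by
      have := hlo Finset.univ
      simpa [kst] using this
    have hstep2 : (∑ B : Finset (V ⊕ Fin (s i')),
          if Finset.univ.map h ⊆ B then w Finset.univ B else 0)
        ≤ ∑ B : Finset (V ⊕ Fin (s i')),
          if Finset.univ.map h ⊆ B then wext (subw c i') (Fin (s i')) B else 0 := by
      apply Finset.sum_le_sum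
      intro B _
      split_ifs with hBs
      · refine le_trans ?_ (hup B)
        have := Finset.single_le_sum
          (f := fun A : Finset (Fin (s i')) => if A.map h ⊆ B then w A B else 0)
          (fun A _ => by dsimp only; split_ifs; exacts [hw0 A B, le_refl 0])
          (Finset.mem_univ (Finset.univ : Finset (Fin (s i'))))
        dsimp only at this
        rwa [if_pos hBs] at this
      · exact le_refl 0
    have hstep3 : (∑ B : Finset (V ⊕ Fin (s i')),
          if Finset.univ.map h ⊆ B then wext (subw c i') (Fin (s i')) B else 0)
        ≤ ((Finset.univ : Finset (Finset (V ⊕ Fin (s i')))).card : ℝ) * ε := by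
      calc _ ≤ ∑ _B : Finset (V ⊕ Fin (s i')), ε := by
            apply Finset.sum_le_sum
            intro B _
            split_ifs with hBs
            · exact hkey B hBs
            · exact hε0.le
      _ = ((Finset.univ : Finset (Finset (V ⊕ Fin (s i')))).card : ℝ) * ε := by
            rw [Finset.sum_const, nsmul_eq_mul]
    have hcount : ((Finset.univ : Finset (Finset (V ⊕ Fin (s i')))).card : ℝ) ≤ (N : ℝ) := by
      have hcc : (Finset.univ : Finset (Finset (V ⊕ Fin (s i')))).card
          = 2 ^ (Fintype.card V + s i') := by
        simp [Fintype.card_finset, Fintype.card_sum]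
      rw [hcc]
      have hsle : s i' ≤ ∑ k, s k :=
        Finset.single_le_sum (fun k _ => Nat.zero_le _) (Finset.mem_univ i')
      have hpow : 2 ^ (Fintype.card V + s i') ≤ N := by
        rw [hNdef]
        exact Nat.pow_le_pow_right (by norm_num) (by omega)
      exact_mod_cast hpow
    have hfin : t i ≤ (N : ℝ) * ε := by
      calc t i ≤ _ := hchain
      _ ≤ _ := hstep2
      _ ≤ _ := hstep3
      _ ≤ (N : ℝ) * ε := mul_le_mul_of_nonneg_right hcount hε0.le
    have := htle i
    linarith
  · obtain ⟨S', h, hbip, hinj, hB⟩ := hGS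
    set idx : Fin r := Fin.cast (Nat.add_sub_cancel' hqr) (Fin.natAdd q j) with hidxdef
    set jj : Fin r := (⟨q + (j : ℕ), by have := j.isLt; omega⟩ : Fin r) with hjjdef
    have hidxjj : idx = jj := by
      apply Fin.ext
      simp [hidxdef, hjjdef]
    have hjz : jj ≠ z := by
      intro hh
      rw [hjjdef, hzdef] at hh
      simp only [Fin.mk.injEq] at hh
      omega
    have hbig : ∀ B : Finset V, 0 < subw c jj B → B.card < s jj := by
      intro B hBp
      by_contra hcB
      push_neg at hcB
      have hss := hsubw jj B hcB
      rw [if_neg hjz] at hss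
      linarith
    have hs0 : 0 < s idx := hs idx
    have ht0 : 0 < tN j := lt_of_lt_of_le (hs idx) (htN j)
    have hadj : ∀ (a : Fin (s idx)) (b : Fin (tN j)),
        (bipAdj (fun (_ : Fin (s idx)) (_ : Fin (tN j)) => True)).Adj (Sum.inl a) (Sum.inr b) :=
      fun a b => Or.inl ⟨a, b, rfl, rfl, trivial⟩
    have hadj' : ∀ (a : Fin (s idx)) (b : Fin (tN j)),
        (bipAdj (fun (_ : Fin (s idx)) (_ : Fin (tN j)) => True)).Adj (Sum.inr b) (Sum.inl a) :=
      fun a b => Or.inr ⟨a, b, rfl, rfl, trivial⟩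
    set a0 : Fin (s idx) := ⟨0, hs0⟩ with ha0def
    set b0 : Fin (tN j) := ⟨0, ht0⟩ with hb0def
    by_cases hb0m : Sum.inr b0 ∈ S'
    · have hnl : ∀ a : Fin (s idx), Sum.inl a ∉ S' :=
        fun a ha => (hbip _ _ (hadj a b0)).1 ha hb0m
      have hnr : ∀ b : Fin (tN j), Sum.inr b ∈ S' := by
        intro b
        by_contra hbn
        exact hnl a0 ((hbip _ _ (hadj a0 b)).2 hbn)
      obtain ⟨B, hBpos, hBmem⟩ := hB (Sum.inl a0) (hnl a0)
      have hmemB : ∀ b : Fin (tN j), h (Sum.inr b) ∈ B :=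
        fun b => hBmem (Sum.inr b) (hnr b) (hadj' a0 b)
      have hcard : tN j ≤ B.card := by
        calc tN j = (Finset.univ : Finset (Fin (tN j))).card := by simp
        _ ≤ B.card := Finset.card_le_card_of_injOn (fun b => h (Sum.inr b))
            (fun b _ => hmemB b)
            (fun b1 _ b2 _ he => Sum.inr.inj (hinj (hnr b1) (hnr b2) he))
      have h1 := hbig B hBpos
      have h2 := htN j
      rw [← hidxdef, hidxjj] at h2
      omega
    · have hl : ∀ a : Fin (s idx), Sum.inl a ∈ S' :=
        fun a => (hbip _ _ (hadj a b0)).2 hb0m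
      obtain ⟨B, hBpos, hBmem⟩ := hB (Sum.inr b0) hb0m
      have hmemB : ∀ a : Fin (s idx), h (Sum.inl a) ∈ B :=
        fun a => hBmem (Sum.inl a) (hl a) (hadj a b0)
      have hcard : s idx ≤ B.card := by
        calc s idx = (Finset.univ : Finset (Fin (s idx))).card := by simp
        _ ≤ B.card := Finset.card_le_card_of_injOn (fun a => h (Sum.inl a))
            (fun a _ => hmemB a)
            (fun a1 _ a2 _ he => Sum.inl.inj (hinj (hl a1) (hl a2) he))
      have h1 := hbig B hBpos
      rw [← hidxjj] at h1
      omega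
end

section
/- Given r ≥ 2, q ≥ 1, positive reals t_1,…,t_q and positive integers s_1,…,s_r, t_{q+1},…,t_r with t_i ≥ s_i for i∈{q+1,…,r}, set F = (k_{s_1,t_1},…,k_{s_q,t_q},K_{s_{q+1},t_{q+1}},…,K_{s_r,t_r}) and σ = Σ_{i=1}^r (s_i−1). Then for every integer s > σ and every real t with 0 < t < sol(L_s), the weight k_{s,t} does not arrow F. -/
open Finset Filter

section AuxCombinatorics

open Classical

variable {α : Type*} [Fintype α] [DecidableEq α] {r : ℕ}

/-- Ordered partitions of the whole vertex set with part sizes `a`. -/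
noncomputable def PartsA (a : Fin r → ℕ) : Finset (Fin r → Finset α) :=
  Finset.univ.filter fun P => PairDisj P ∧ Finset.univ.biUnion P = Finset.univ ∧
    ∀ j, (P j).card = a j

/-- Number of ordered partitions with sizes `a` whose `i`-th part contains `S`. -/
noncomputable def CntA (a : Fin r → ℕ) (i : Fin r) (S : Finset α) : ℕ :=
  ((PartsA a).filter fun P => S ⊆ P i).card

lemma exists_perm_image {S S' : Finset α} (h : S.card = S'.card) :
    ∃ σ : Equiv.Perm α, S.image σ = S' := by
  have hc : (Sᶜ).card = (S'ᶜ).card := by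
    simp [Finset.card_compl, h]
  let e1 : (S : Finset α) ≃ (S' : Finset α) := Finset.equivOfCardEq h
  let e2 : ((Sᶜ : Finset α) : Type _) ≃ ((S'ᶜ : Finset α) : Type _) := Finset.equivOfCardEq hc
  let e2' : {x // ¬ x ∈ S} ≃ {x // ¬ x ∈ S'} :=
    ((Equiv.subtypeEquivRight fun x => (Finset.mem_compl (s := S)).symm).trans e2).trans
      (Equiv.subtypeEquivRight fun x => Finset.mem_compl)
  let σ : Equiv.Perm α :=
    ((Equiv.sumCompl (· ∈ S)).symm.trans (e1.sumCongr e2')).trans (Equiv.sumCompl (· ∈ S'))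
  refine ⟨σ, Finset.eq_of_subset_of_card_le ?_ ?_⟩
  · intro y hy
    simp only [Finset.mem_image] at hy
    obtain ⟨x, hx, rfl⟩ := hy
    have h1 : (Equiv.sumCompl (· ∈ S)).symm x = Sum.inl ⟨x, hx⟩ :=
      Equiv.sumCompl_symm_apply_of_pos hx
    have h2 : σ x = (e1 ⟨x, hx⟩ : α) := by
      simp only [σ, Equiv.trans_apply, h1, Equiv.sumCongr_apply, Sum.map_inl,
        Equiv.sumCompl_apply_inl]
    rw [h2]
    exact (e1 ⟨x, hx⟩).2
  · rw [Finset.card_image_of_injective _ σ.injective, h]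

lemma cntA_const (a : Fin r → ℕ) (i : Fin r) {S S' : Finset α}
    (h : S.card = S'.card) : CntA a i S = CntA a i S' := by
  obtain ⟨σ, hσ⟩ := exists_perm_image h
  unfold CntA
  refine Finset.card_bij' (fun P _ => fun j => (P j).image σ)
    (fun P _ => fun j => (P j).image σ.symm) ?_ ?_ ?_ ?_
  · intro P hP
    simp only [Finset.mem_filter, PartsA, Finset.mem_univ, true_and] at hP ⊢
    obtain ⟨⟨hd, hu, hcards⟩, hsub⟩ := hP
    refine ⟨⟨?_, ?_, ?_⟩, ?_⟩
    · intro i' j' hne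
      exact (Finset.disjoint_image σ.injective).mpr (hd i' j' hne)
    · apply Finset.eq_univ_of_forall
      intro y
      have hy : σ.symm y ∈ Finset.univ.biUnion P := by rw [hu]; exact Finset.mem_univ _
      obtain ⟨j, -, hj⟩ := Finset.mem_biUnion.mp hy
      exact Finset.mem_biUnion.mpr ⟨j, Finset.mem_univ j,
        Finset.mem_image.mpr ⟨_, hj, by simp⟩⟩
    · intro j; rw [Finset.card_image_of_injective _ σ.injective]; exact hcards j
    · rw [← hσ]; exact Finset.image_subset_image hsub
  · intro P hP
    simp only [Finset.mem_filter, PartsA, Finset.mem_univ, true_and] at hP ⊢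
    obtain ⟨⟨hd, hu, hcards⟩, hsub⟩ := hP
    refine ⟨⟨?_, ?_, ?_⟩, ?_⟩
    · intro i' j' hne
      exact (Finset.disjoint_image σ.symm.injective).mpr (hd i' j' hne)
    · apply Finset.eq_univ_of_forall
      intro y
      have hy : σ y ∈ Finset.univ.biUnion P := by rw [hu]; exact Finset.mem_univ _
      obtain ⟨j, -, hj⟩ := Finset.mem_biUnion.mp hy
      exact Finset.mem_biUnion.mpr ⟨j, Finset.mem_univ j,
        Finset.mem_image.mpr ⟨_, hj, by simp⟩⟩
    · intro j; rw [Finset.card_image_of_injective _ σ.symm.injective]; exact hcards j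
    · have : S = S'.image σ.symm := by
        rw [← hσ, Finset.image_image]
        simp [Function.comp]
      rw [this]
      exact Finset.image_subset_image hsub
  · intro P _
    funext j
    simp [Finset.image_image, Function.comp]
  · intro P _
    funext j
    simp [Finset.image_image, Function.comp]

lemma cntA_mul (a : Fin r → ℕ) (i : Fin r) {S : Finset α} {k : ℕ} (hS : S.card = k) :
    CntA a i S * (Fintype.card α).choose k = (a i).choose k * (PartsA (α := α) a).card := by
  have key : ∑ S' ∈ Finset.powersetCard k (Finset.univ : Finset α), CntA a i S'
      = ∑ _P ∈ PartsA (α := α) a, (a i).choose k := by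
    have h1 : ∀ S' ∈ Finset.powersetCard k (Finset.univ : Finset α),
        CntA a i S' = ∑ P ∈ PartsA (α := α) a, if S' ⊆ P i then 1 else 0 := by
      intro S' _
      rw [CntA, Finset.card_filter]
    rw [Finset.sum_congr rfl h1, Finset.sum_comm]
    refine Finset.sum_congr rfl fun P hP => ?_
    have hPi : (P i).card = a i := by
      simp only [PartsA, Finset.mem_filter] at hP
      exact hP.2.2.2 i
    have h2 : (Finset.powersetCard k (Finset.univ : Finset α)).filter (fun S' => S' ⊆ P i)
        = Finset.powersetCard k (P i) := by
      ext S'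
      simp only [Finset.mem_filter, Finset.mem_powersetCard]
      constructor
      · rintro ⟨⟨_, hc⟩, hsub⟩; exact ⟨hsub, hc⟩
      · rintro ⟨hsub, hc⟩; exact ⟨⟨Finset.subset_univ _, hc⟩, hsub⟩
    rw [← Finset.card_filter, h2, Finset.card_powersetCard, hPi]
  have h3 : ∑ S' ∈ Finset.powersetCard k (Finset.univ : Finset α), CntA a i S'
      = (Fintype.card α).choose k * CntA a i S := by
    have : ∀ S' ∈ Finset.powersetCard k (Finset.univ : Finset α),
        CntA a i S' = CntA a i S := by
      intro S' hS'
      refine cntA_const a i ?_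
      rw [(Finset.mem_powersetCard.mp hS').2, hS]
    rw [Finset.sum_congr rfl this, Finset.sum_const, Finset.card_powersetCard,
      Finset.card_univ, smul_eq_mul]
  rw [h3, Finset.sum_const, smul_eq_mul] at key
  rw [mul_comm, key, mul_comm]

lemma exists_parts : ∀ {m : ℕ} (b : Fin m → ℕ) (T : Finset α), (∑ j, b j) = T.card →
    ∃ P : Fin m → Finset α, PairDisj P ∧ Finset.univ.biUnion P = T ∧
      ∀ j, (P j).card = b j := by
  intro m
  induction m with
  | zero =>
    intro b T hT
    refine ⟨fun j => j.elim0, fun i => i.elim0, ?_, fun j => j.elim0⟩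
    have : T.card = 0 := by simpa using hT.symm
    rw [Finset.card_eq_zero.mp this]
    simp
  | succ m ih =>
    intro b T hT
    have hb0 : b 0 ≤ T.card := by
      rw [← hT, Fin.sum_univ_succ]; omega
    obtain ⟨S0, hS0sub, hS0card⟩ := Finset.exists_subset_card_eq hb0
    have hcard : (∑ j, b (Fin.succ j)) = (T \ S0).card := by
      rw [Finset.card_sdiff_of_subset hS0sub, ← hT, Fin.sum_univ_succ, hS0card]
      omega
    obtain ⟨Q, hQd, hQu, hQc⟩ := ih (fun j => b j.succ) (T \ S0) hcard
    have hQsub : ∀ j, Q j ⊆ T \ S0 := by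
      intro j
      rw [← hQu]
      exact Finset.subset_biUnion_of_mem Q (Finset.mem_univ j)
    have hdisj : ∀ j, Disjoint S0 (Q j) := by
      intro j
      exact (Finset.sdiff_disjoint.symm).mono_right (hQsub j)
    refine ⟨Fin.cases S0 Q, ?_, ?_, ?_⟩
    · intro i j hne
      rcases Fin.eq_zero_or_eq_succ i with rfl | ⟨i', rfl⟩ <;>
        rcases Fin.eq_zero_or_eq_succ j with rfl | ⟨j', rfl⟩
      · exact absurd rfl hne
      · simpa using hdisj j'
      · simpa using (hdisj i').symm
      · simpa using hQd i' j' (fun h => hne (by rw [h]))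
    · ext x
      simp only [Finset.mem_biUnion, Finset.mem_univ, true_and]
      rw [Fin.exists_fin_succ]
      simp only [Fin.cases_zero, Fin.cases_succ]
      constructor
      · rintro (hx | ⟨j, hj⟩)
        · exact hS0sub hx
        · exact (Finset.mem_sdiff.mp (hQsub j hj)).1
      · intro hx
        by_cases hxS : x ∈ S0
        · exact Or.inl hxS
        · right
          have : x ∈ Finset.univ.biUnion Q := by
            rw [hQu]; exact Finset.mem_sdiff.mpr ⟨hx, hxS⟩
          simpa using this
    · intro j
      rcases Fin.eq_zero_or_eq_succ j with rfl | ⟨j', rfl⟩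
      · simpa using hS0card
      · simpa using hQc j'

lemma partsA_nonempty (a : Fin r → ℕ) (ha : ∑ j, a j = Fintype.card α) :
    (PartsA (α := α) a).Nonempty := by
  obtain ⟨P, h1, h2, h3⟩ := exists_parts a Finset.univ (ha.trans Finset.card_univ.symm)
  exact ⟨P, by simp only [PartsA, Finset.mem_filter, Finset.mem_univ, true_and]; exact ⟨h1, h2, h3⟩⟩

end AuxCombinatorics
section AuxSums

open Classical

set_option linter.unusedSectionVars false

variable {V : Type*} [Fintype V] [DecidableEq V] {r : ℕ}

lemma subw_superset_sum (c : (Fin r → Finset V) → ℝ) (i : Fin r) (S : Finset V) :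
    ∑ B : Finset V, (if S ⊆ B then subw c i B else 0)
      = ∑ P : Fin r → Finset V, (if PairDisj P ∧ S ⊆ P i then c P else 0) := by
  unfold subw
  have h1 : ∀ B : Finset V,
      (if S ⊆ B then (∑ P : Fin r → Finset V, if PairDisj P ∧ P i = B then c P else 0) else 0)
      = ∑ P : Fin r → Finset V,
          (if S ⊆ B then (if PairDisj P ∧ P i = B then c P else 0) else 0) := by
    intro B
    split_ifs with h
    · rfl
    · simp
  rw [Finset.sum_congr rfl fun B _ => h1 B, Finset.sum_comm]
  refine Finset.sum_congr rfl fun P _ => ?_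
  have h2 : ∀ B : Finset V,
      (if S ⊆ B then (if PairDisj P ∧ P i = B then c P else 0) else 0)
      = if B = P i then (if PairDisj P ∧ S ⊆ P i then c P else 0) else 0 := by
    intro B
    by_cases hB : B = P i
    · subst hB
      by_cases hPD : PairDisj P <;> by_cases hS : S ⊆ P i <;> simp [hPD, hS]
    · have hB' : ¬ (P i = B) := fun h => hB h.symm
      simp [hB, hB']
  rw [Finset.sum_congr rfl fun B _ => h2 B, Finset.sum_ite_eq' Finset.univ (P i)]
  simp

lemma subw_support {c : (Fin r → Finset V) → ℝ} {i : Fin r} {B : Finset V}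
    (h : subw c i B ≠ 0) : ∃ P, PairDisj P ∧ P i = B ∧ c P ≠ 0 := by
  unfold subw at h
  obtain ⟨P, -, hP⟩ := Finset.exists_ne_zero_of_sum_ne_zero h
  by_cases h1 : PairDisj P ∧ P i = B
  · refine ⟨P, h1.1, h1.2, ?_⟩
    simpa [h1] using hP
  · simp [h1] at hP

lemma wext_sum_map {W F : Type*} [Fintype W] [DecidableEq W] [Fintype F] [DecidableEq F]
    (g : Finset V → ℝ) (f : F → V) :
    ∑ B : Finset (V ⊕ W), (if Finset.univ.image (fun x => (Sum.inl (f x) : V ⊕ W)) ⊆ B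
        then wext g W B else 0)
      = ∑ B' : Finset V, (if Finset.univ.image f ⊆ B' then g B' else 0) := by
  have hzero : ∀ B : Finset (V ⊕ W), ¬ (∀ b ∈ B, b.isLeft = true) → wext g W B = 0 := by
    intro B hB; rw [wext, dif_neg hB]
  rw [← Finset.sum_filter_add_sum_filter_not Finset.univ
    (fun B : Finset (V ⊕ W) => ∀ b ∈ B, b.isLeft = true)]
  have h2 : ∑ B ∈ Finset.univ.filter
      (fun B : Finset (V ⊕ W) => ¬ ∀ b ∈ B, b.isLeft = true),
      (if Finset.univ.image (fun x => (Sum.inl (f x) : V ⊕ W)) ⊆ B then wext g W B else 0)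
      = 0 := by
    refine Finset.sum_eq_zero fun B hB => ?_
    rw [hzero B (Finset.mem_filter.mp hB).2]
    simp
  rw [h2, add_zero]
  refine Finset.sum_nbij' (fun B => B.preimage Sum.inl Sum.inl_injective.injOn)
    (fun B' => B'.map ⟨Sum.inl, Sum.inl_injective⟩) ?_ ?_ ?_ ?_ ?_
  · intro B _; exact Finset.mem_univ _
  · intro B' _
    refine Finset.mem_filter.mpr ⟨Finset.mem_univ _, fun b hb => ?_⟩
    obtain ⟨y, -, rfl⟩ := Finset.mem_map.mp hb
    rfl
  · intro B hB
    have hall := (Finset.mem_filter.mp hB).2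
    ext x
    cases x with
    | inl v => simp [Finset.mem_map, Finset.mem_preimage]
    | inr w =>
      simp only [Finset.mem_map, Finset.mem_preimage, Function.Embedding.coeFn_mk]
      constructor
      · rintro ⟨y, -, h⟩; exact absurd h (by simp)
      · intro h; exact absurd (hall _ h) (by simp)
  · intro B' _
    ext v
    simp [Finset.mem_preimage, Finset.mem_map]
  · intro B hB
    have hall := (Finset.mem_filter.mp hB).2
    have hcond : (Finset.univ.image (fun x => (Sum.inl (f x) : V ⊕ W)) ⊆ B)
        ↔ (Finset.univ.image f ⊆ B.preimage Sum.inl Sum.inl_injective.injOn) := by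
      constructor
      · intro hsub y hy
        obtain ⟨x, -, rfl⟩ := Finset.mem_image.mp hy
        exact Finset.mem_preimage.mpr (hsub (Finset.mem_image.mpr ⟨x, Finset.mem_univ _, rfl⟩))
      · intro hsub y hy
        obtain ⟨x, -, rfl⟩ := Finset.mem_image.mp hy
        exact Finset.mem_preimage.mp (hsub (Finset.mem_image.mpr ⟨x, Finset.mem_univ _, rfl⟩))
    rw [if_congr hcond rfl rfl]
    split_ifs with hc
    · rw [wext, dif_pos hall]
    · rfl

end AuxSums
section AuxCPart

open Classical

set_option linter.unusedSectionVars false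

variable {r : ℕ}

lemma mem_PiS {q sv : ℕ} {s : Fin r → ℕ} {a : Fin r → ℕ} (ha : a ∈ PiS r q s sv) :
    (∀ i : Fin r, q ≤ (i : ℕ) → a i = s i - 1) ∧ ∑ i, a i = sv :=
  (Finset.mem_filter.mp ha).2

lemma mem_partsA {α : Type*} [Fintype α] [DecidableEq α] {a : Fin r → ℕ}
    {P : Fin r → Finset α} : P ∈ PartsA a ↔ PairDisj P ∧
      Finset.univ.biUnion P = Finset.univ ∧ ∀ j, (P j).card = a j := by
  simp [PartsA]

lemma pairDisj_of_tail_empty {α : Type*} [Fintype α] [DecidableEq α]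
    {P : Fin r → Finset α} (h : ∀ i : Fin r, (i : ℕ) ≠ 0 → P i = ∅) : PairDisj P := by
  intro i j hne
  by_cases hi : (i : ℕ) = 0
  · have hj : (j : ℕ) ≠ 0 := fun h' => hne (Fin.ext (by omega))
    simp [h j hj]
  · simp [h i hi]

/-- The partition part of the colouring. -/
noncomputable def cPart (q sv : ℕ) (s : Fin r → ℕ) (w : (Fin r → ℕ) → ℝ) :
    (Fin r → Finset (Fin sv)) → ℝ :=
  fun P => ∑ a ∈ PiS r q s sv,
    if P ∈ PartsA a then w a / ((PartsA (α := Fin sv) a).card : ℝ) else 0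

/-- The special part of the colouring. -/
noncomputable def cSpec (sv : ℕ) (ε : ℝ) : (Fin r → Finset (Fin sv)) → ℝ :=
  fun P => if ∀ i : Fin r, (i : ℕ) ≠ 0 → P i = ∅ then ε else 0

lemma cPart_nonneg {q sv : ℕ} {s : Fin r → ℕ} {w : (Fin r → ℕ) → ℝ}
    (hw : ∀ a, 0 ≤ w a) (P : Fin r → Finset (Fin sv)) : 0 ≤ cPart q sv s w P := by
  refine Finset.sum_nonneg fun a _ => ?_
  split_ifs
  · exact div_nonneg (hw a) (Nat.cast_nonneg _)
  · exact le_refl 0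

lemma cSpec_nonneg {sv : ℕ} {ε : ℝ} (hε : 0 ≤ ε) (P : Fin r → Finset (Fin sv)) :
    0 ≤ cSpec sv ε P := by
  rw [cSpec]; split_ifs <;> simp [hε]

lemma cSpec_le {sv : ℕ} {ε : ℝ} (hε : 0 ≤ ε) (P : Fin r → Finset (Fin sv)) :
    cSpec sv ε P ≤ ε := by
  rw [cSpec]; split_ifs <;> simp [hε]

lemma cSpec_support {sv : ℕ} {ε : ℝ} {P : Fin r → Finset (Fin sv)}
    (h : cSpec sv ε P ≠ 0) : ∀ i : Fin r, (i : ℕ) ≠ 0 → P i = ∅ := by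
  rw [cSpec] at h
  by_contra hc
  rw [if_neg hc] at h
  exact h rfl

lemma cPart_eq_zero {q sv : ℕ} {s : Fin r → ℕ} {w : (Fin r → ℕ) → ℝ}
    {P : Fin r → Finset (Fin sv)}
    (hP : ¬ (PairDisj P ∧ Finset.univ.biUnion P = Finset.univ)) :
    cPart q sv s w P = 0 := by
  refine Finset.sum_eq_zero fun a _ => ?_
  rw [if_neg]
  intro hmem
  obtain ⟨h1, h2, -⟩ := mem_partsA.mp hmem
  exact hP ⟨h1, h2⟩

lemma cPart_support {q sv : ℕ} {s : Fin r → ℕ} {w : (Fin r → ℕ) → ℝ}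
    {P : Fin r → Finset (Fin sv)} (h : cPart q sv s w P ≠ 0) :
    ∃ a ∈ PiS r q s sv, P ∈ PartsA a := by
  obtain ⟨a, ha, hne⟩ := Finset.exists_ne_zero_of_sum_ne_zero h
  by_cases hmem : P ∈ PartsA a
  · exact ⟨a, ha, hmem⟩
  · rw [if_neg hmem] at hne; exact absurd rfl hne

lemma cPart_total {q sv : ℕ} {s : Fin r → ℕ} (w : (Fin r → ℕ) → ℝ) :
    ∑ P : Fin r → Finset (Fin sv), cPart q sv s w P = ∑ a ∈ PiS r q s sv, w a := by
  unfold cPart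
  rw [Finset.sum_comm]
  refine Finset.sum_congr rfl fun a ha => ?_
  rw [Finset.sum_ite_mem, Finset.univ_inter, Finset.sum_const, nsmul_eq_mul]
  have hne : (PartsA (α := Fin sv) a).Nonempty := by
    refine partsA_nonempty a ?_
    rw [Fintype.card_fin]
    exact (mem_PiS ha).2
  have hN : ((PartsA (α := Fin sv) a).card : ℝ) ≠ 0 :=
    Nat.cast_ne_zero.mpr (Finset.card_pos.mpr hne).ne'
  rw [mul_comm, div_mul_cancel₀ _ hN]

lemma cPart_mass {q sv : ℕ} {s : Fin r → ℕ} (w : (Fin r → ℕ) → ℝ) (i : Fin r)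
    (S : Finset (Fin sv)) :
    ∑ P : Fin r → Finset (Fin sv),
        (if PairDisj P ∧ S ⊆ P i then cPart q sv s w P else 0)
      = (∑ a ∈ PiS r q s sv, w a * (((a i).choose S.card : ℕ) : ℝ))
          / ((sv.choose S.card : ℕ) : ℝ) := by
  set k := S.card with hk
  have hksv : k ≤ sv := by
    rw [hk]
    calc S.card ≤ (Finset.univ : Finset (Fin sv)).card := Finset.card_le_univ S
    _ = sv := by rw [Finset.card_univ, Fintype.card_fin]
  have hC : (0 : ℝ) < ((sv.choose k : ℕ) : ℝ) := by
    exact_mod_cast Nat.choose_pos hksv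
  unfold cPart
  have h1 : ∀ P : Fin r → Finset (Fin sv),
      (if PairDisj P ∧ S ⊆ P i then
        (∑ a ∈ PiS r q s sv,
          if P ∈ PartsA a then w a / ((PartsA (α := Fin sv) a).card : ℝ) else 0) else 0)
      = ∑ a ∈ PiS r q s sv, (if P ∈ (PartsA (α := Fin sv) a).filter (fun P => S ⊆ P i)
          then w a / ((PartsA (α := Fin sv) a).card : ℝ) else 0) := by
    intro P
    by_cases hcond : PairDisj P ∧ S ⊆ P i
    · rw [if_pos hcond]
      refine Finset.sum_congr rfl fun a _ => ?_
      by_cases hmem : P ∈ PartsA (α := Fin sv) a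
      · rw [if_pos hmem, if_pos (Finset.mem_filter.mpr ⟨hmem, hcond.2⟩)]
      · rw [if_neg hmem, if_neg (fun hmem2 => hmem (Finset.mem_filter.mp hmem2).1)]
    · rw [if_neg hcond]
      symm
      refine Finset.sum_eq_zero fun a _ => ?_
      rw [if_neg]
      intro hmem
      obtain ⟨h2, h3⟩ := Finset.mem_filter.mp hmem
      exact hcond ⟨(mem_partsA.mp h2).1, h3⟩
  rw [Finset.sum_congr rfl fun P _ => h1 P, Finset.sum_comm, Finset.sum_div]
  refine Finset.sum_congr rfl fun a ha => ?_
  rw [Finset.sum_ite_mem, Finset.univ_inter, Finset.sum_const, nsmul_eq_mul]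
  have hne : (PartsA (α := Fin sv) a).Nonempty := by
    refine partsA_nonempty a ?_
    rw [Fintype.card_fin]
    exact (mem_PiS ha).2
  have hN : (0 : ℝ) < ((PartsA (α := Fin sv) a).card : ℝ) := by
    exact_mod_cast Finset.card_pos.mpr hne
  have h0 := cntA_mul (α := Fin sv) a i hk.symm
  rw [Fintype.card_fin] at h0
  have hcnt : (CntA a i S : ℝ) * ((sv.choose k : ℕ) : ℝ)
      = (((a i).choose k : ℕ) : ℝ) * ((PartsA (α := Fin sv) a).card : ℝ) := by
    exact_mod_cast congrArg (Nat.cast (R := ℝ)) h0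
  rw [show ((PartsA (α := Fin sv) a).filter fun P => S ⊆ P i).card = CntA a i S from rfl]
  rw [eq_div_iff hC.ne']
  field_simp
  linear_combination w a * hcnt

end AuxCPart

/-- **Claim 1.** For every integer `s > σ` and every real
`0 < t < sol(L_s)`, the weight `k_{s,t}` does not arrow `F`. -/
theorem stmt_10 (r q : ℕ) (hr : 2 ≤ r) (hq : 1 ≤ q) (hqr : q ≤ r)
    (s : Fin r → ℕ) (t : Fin q → ℝ) (tN : Fin (r - q) → ℕ)
    (hs : ∀ i, 0 < s i) (ht : ∀ i, 0 < t i)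
    (htN : ∀ j : Fin (r - q),
      s (Fin.cast (Nat.add_sub_cancel' hqr) (Fin.natAdd q j)) ≤ tN j)
    (sv : ℕ) (hsv : (∑ i : Fin r, (s i - 1)) < sv)
    (T : ℝ) (hT : 0 < T) (hTs : T < solL r q hqr s t sv) :
    ¬ WArrows r q hqr (fun i => Fin (s (Fin.castLE hqr i)))
      (fun i => kst (s (Fin.castLE hqr i)) (t i))
      (fun j => Fin (s (Fin.cast (Nat.add_sub_cancel' hqr) (Fin.natAdd q j))))
      (fun j => Fin (tN j)) (fun _ _ _ => True) (Fin sv) (kst sv T) := by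
  classical
  intro hW
  have hssv : ∀ i : Fin r, s i ≤ sv := by
    intro i
    have h1 : s i - 1 ≤ ∑ j2 : Fin r, (s j2 - 1) :=
      Finset.single_le_sum (f := fun j2 => s j2 - 1) (fun _ _ => Nat.zero_le _)
        (Finset.mem_univ i)
    have := hs i
    omega
  -- extract an LP solution beating T
  rw [solL] at hTs
  have hset : {x : ℝ | ∃ w : (Fin r → ℕ) → ℝ, (∀ a, 0 ≤ w a) ∧
      (∀ i : Fin q, ∑ a ∈ PiS r q s sv,
          w a * ((a (Fin.castLE hqr i)).choose (s (Fin.castLE hqr i)) : ℝ)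
        ≤ t i * ((sv.choose (s (Fin.castLE hqr i))) : ℝ)) ∧
      x = ∑ a ∈ PiS r q s sv, w a}.Nonempty := by
    refine ⟨0, fun _ => 0, fun a => le_refl 0, fun i => ?_, by simp⟩
    simp only [zero_mul, Finset.sum_const_zero]
    exact mul_nonneg (ht i).le (Nat.cast_nonneg _)
  obtain ⟨x, hx, hTx⟩ := exists_lt_of_lt_csSup hset hTs
  obtain ⟨w, hw0, hwc, rfl⟩ := hx
  set V' := ∑ a ∈ PiS r q s sv, w a with hV'
  have hV'pos : 0 < V' := lt_trans hT hTx
  set lam := (T / V' + 1) / 2 with hlam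
  have hdiv1 : T / V' < 1 := (div_lt_one hV'pos).mpr hTx
  have hdiv0 : 0 < T / V' := div_pos hT hV'pos
  have hlam1 : lam < 1 := by rw [hlam]; linarith
  have hlam0 : 0 < lam := by rw [hlam]; linarith
  have hlamT : T < lam * V' := by
    have h1 : T / V' < lam := by rw [hlam]; linarith
    calc T = (T / V') * V' := by field_simp
    _ < lam * V' := mul_lt_mul_of_pos_right h1 hV'pos
  have huq : (Finset.univ : Finset (Fin q)).Nonempty := ⟨⟨0, hq⟩, Finset.mem_univ _⟩
  set tmin := Finset.univ.inf' huq t with htmin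
  have htmin_pos : 0 < tmin := by
    rw [htmin, Finset.lt_inf'_iff]
    exact fun i _ => ht i
  have htmin_le : ∀ i, tmin ≤ t i := fun i => Finset.inf'_le _ (Finset.mem_univ i)
  set K := ((Fintype.card (Fin r → Finset (Fin sv)) : ℕ) : ℝ) with hK
  have hK0 : 0 ≤ K := Nat.cast_nonneg _
  set ε := (1 - lam) * tmin / (2 * (K + 1)) with hε
  have hεpos : 0 < ε := by
    apply div_pos (mul_pos (by linarith) htmin_pos) (by linarith)
  have hεK : ε * K < (1 - lam) * tmin := by
    rw [hε, div_mul_eq_mul_div, div_lt_iff₀ (by linarith)]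
    have h1 : 0 < (1 - lam) * tmin := mul_pos (by linarith) htmin_pos
    nlinarith
  set w' : (Fin r → ℕ) → ℝ := fun a => lam * w a with hw'
  have hw'0 : ∀ a, 0 ≤ w' a := fun a => mul_nonneg hlam0.le (hw0 a)
  set c : (Fin r → Finset (Fin sv)) → ℝ :=
    fun P => cPart q sv s w' P + cSpec sv ε P with hc
  have hc0 : ∀ P, 0 ≤ c P := fun P =>
    add_nonneg (cPart_nonneg hw'0 P) (cSpec_nonneg hεpos.le P)
  -- the colouring is a colouring of kst sv T
  have hcol : IsColouring (kst sv T) c := by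
    refine ⟨hc0, ?_, ?_⟩
    · intro P hPD
      have h1 : cPart q sv s w' P = 0 := cPart_eq_zero (fun hcon => hPD hcon.1)
      have h2 : cSpec sv ε P = 0 := by
        rw [cSpec, if_neg]
        intro hall
        exact hPD (pairDisj_of_tail_empty hall)
      rw [hc]
      simp [h1, h2]
    · intro A
      by_cases hA : A = Finset.univ
      · subst hA
        have hge : ∑ P : Fin r → Finset (Fin sv), cPart q sv s w' P
            ≤ ∑ P : Fin r → Finset (Fin sv),
              (if PairDisj P ∧ Finset.univ.biUnion P = Finset.univ then c P else 0) := by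
          refine Finset.sum_le_sum fun P _ => ?_
          by_cases hcond : PairDisj P ∧ Finset.univ.biUnion P = Finset.univ
          · rw [if_pos hcond, hc]
            exact le_add_of_nonneg_right (cSpec_nonneg hεpos.le P)
          · rw [if_neg hcond, cPart_eq_zero hcond]
        have heq : ∑ P : Fin r → Finset (Fin sv), cPart q sv s w' P = lam * V' := by
          rw [cPart_total, hw', hV', Finset.mul_sum]
        have hlt : kst sv T Finset.univ < lam * V' := by
          rw [kst, if_pos rfl]
          exact hlamT
        calc kst sv T Finset.univ < lam * V' := hlt
        _ = ∑ P : Fin r → Finset (Fin sv), cPart q sv s w' P := heq.symm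
        _ ≤ _ := hge
      · have h0 : kst sv T A = 0 := by rw [kst, if_neg hA]
        rw [h0]
        set P0 : Fin r → Finset (Fin sv) := fun i => if (i : ℕ) = 0 then A else ∅ with hP0
        have hP0tail : ∀ i : Fin r, (i : ℕ) ≠ 0 → P0 i = ∅ := by
          intro i hi
          rw [hP0]
          simp [hi]
        have hP0disj : PairDisj P0 := pairDisj_of_tail_empty hP0tail
        have hP0un : Finset.univ.biUnion P0 = A := by
          apply Finset.Subset.antisymm
          · intro x hx
            obtain ⟨i, -, hxi⟩ := Finset.mem_biUnion.mp hx
            by_cases hi : (i : ℕ) = 0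
            · rw [hP0] at hxi
              simpa [hi] using hxi
            · rw [hP0tail i hi] at hxi
              exact absurd hxi (Finset.notMem_empty x)
          · intro x hx
            refine Finset.mem_biUnion.mpr ⟨⟨0, by omega⟩, Finset.mem_univ _, ?_⟩
            rw [hP0]
            simpa using hx
        have hterm : (if PairDisj P0 ∧ Finset.univ.biUnion P0 = A then c P0 else 0) = c P0 :=
          if_pos ⟨hP0disj, hP0un⟩
        have hsingle : c P0 ≤ ∑ P : Fin r → Finset (Fin sv),
            (if PairDisj P ∧ Finset.univ.biUnion P = A then c P else 0) := by
          rw [← hterm]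
          refine Finset.single_le_sum (f := fun P =>
            if PairDisj P ∧ Finset.univ.biUnion P = A then c P else 0) ?_ (Finset.mem_univ P0)
          intro P _
          split_ifs
          · exact hc0 P
          · exact le_refl 0
        have hcP0 : ε ≤ c P0 := by
          have h2 : cSpec sv ε P0 = ε := by rw [cSpec, if_pos hP0tail]
          have h3 : 0 ≤ cPart q sv s w' P0 := cPart_nonneg hw'0 P0
          calc ε = 0 + cSpec sv ε P0 := by rw [h2, zero_add]
          _ ≤ cPart q sv s w' P0 + cSpec sv ε P0 := by linarith
          _ = c P0 := rfl
        calc (0 : ℝ) < ε := hεpos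
        _ ≤ c P0 := hcP0
        _ ≤ _ := hsingle
  -- apply the arrowing hypothesis
  rcases hW c hcol with ⟨i, hsub⟩ | ⟨j, hsub⟩
  · -- weight colour case
    set i' : Fin r := Fin.castLE hqr i with hi'
    set k := s i' with hk
    obtain ⟨h, w2, hw2nn, hw2supp, hlow, hupp⟩ := hsub
    have h1 : t i ≤ ∑ B : Finset (Fin sv ⊕ Fin k),
        (if Finset.univ.map h ⊆ B then wext (subw c i') (Fin k) B else 0) := by
      have h0 := hlow Finset.univ
      simp only [kst, if_pos, eq_self_iff_true, if_true] at h0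
      refine le_trans h0 (Finset.sum_le_sum fun B _ => ?_)
      by_cases hcond : Finset.univ.map h ⊆ B
      · rw [if_pos hcond, if_pos hcond]
        have h2 : ∀ A ∈ (Finset.univ : Finset (Finset (Fin k))),
            (0:ℝ) ≤ if A.map h ⊆ B then w2 A B else 0 := by
          intro A _
          split_ifs
          · exact hw2nn A B
          · exact le_refl 0
        calc w2 Finset.univ B
            = if (Finset.univ : Finset (Fin k)).map h ⊆ B then w2 Finset.univ B else 0 :=
              (if_pos hcond).symm
        _ ≤ ∑ A : Finset (Fin k), (if A.map h ⊆ B then w2 A B else 0) :=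
              Finset.single_le_sum h2 (Finset.mem_univ _)
        _ ≤ _ := hupp B
      · rw [if_neg hcond, if_neg hcond]
    by_cases hall : ∀ x : Fin k, (h x).isLeft
    · choose f hf using fun x => Sum.isLeft_iff.mp (hall x)
      have hfinj : Function.Injective f := by
        intro x y hxy
        apply h.injective
        rw [hf x, hf y, hxy]
      set S : Finset (Fin sv) := Finset.univ.image f with hS
      have hScard : S.card = k := by
        rw [hS, Finset.card_image_of_injective _ hfinj, Finset.card_univ, Fintype.card_fin]
      have himg : Finset.univ.map h
          = Finset.univ.image (fun x => (Sum.inl (f x) : Fin sv ⊕ Fin k)) := by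
        rw [Finset.map_eq_image]
        exact Finset.image_congr (fun x _ => hf x)
      rw [himg, wext_sum_map (subw c i') f, subw_superset_sum c i' S] at h1
      -- split the sum
      have hsplit : ∑ P : Fin r → Finset (Fin sv),
          (if PairDisj P ∧ S ⊆ P i' then c P else 0)
          = (∑ P : Fin r → Finset (Fin sv),
              (if PairDisj P ∧ S ⊆ P i' then cPart q sv s w' P else 0))
            + ∑ P : Fin r → Finset (Fin sv),
              (if PairDisj P ∧ S ⊆ P i' then cSpec sv ε P else 0) := by
        rw [← Finset.sum_add_distrib]
        refine Finset.sum_congr rfl fun P _ => ?_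
        rw [hc]
        split_ifs
        · rfl
        · rw [add_zero]
      have hmass : ∑ P : Fin r → Finset (Fin sv),
          (if PairDisj P ∧ S ⊆ P i' then cPart q sv s w' P else 0) ≤ lam * t i := by
        rw [cPart_mass w' i' S, hScard]
        have hnum : ∑ a ∈ PiS r q s sv, w' a * (((a i').choose k : ℕ) : ℝ)
            ≤ lam * (t i * ((sv.choose k : ℕ) : ℝ)) := by
          have := hwc i
          rw [← hi', ← hk] at this
          calc ∑ a ∈ PiS r q s sv, w' a * (((a i').choose k : ℕ) : ℝ)
              = lam * ∑ a ∈ PiS r q s sv, w a * (((a i').choose k : ℕ) : ℝ) := by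
                rw [Finset.mul_sum]
                refine Finset.sum_congr rfl fun a _ => ?_
                rw [hw']
                ring
          _ ≤ lam * (t i * ((sv.choose k : ℕ) : ℝ)) :=
                mul_le_mul_of_nonneg_left this hlam0.le
        have hCpos : (0 : ℝ) < ((sv.choose k : ℕ) : ℝ) := by
          exact_mod_cast Nat.choose_pos (by rw [hk]; exact hssv i')
        rw [div_le_iff₀ hCpos]
        calc ∑ a ∈ PiS r q s sv, w' a * (((a i').choose k : ℕ) : ℝ)
            ≤ lam * (t i * ((sv.choose k : ℕ) : ℝ)) := hnum
        _ = lam * t i * ((sv.choose k : ℕ) : ℝ) := by ring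
      have hspec : ∑ P : Fin r → Finset (Fin sv),
          (if PairDisj P ∧ S ⊆ P i' then cSpec sv ε P else 0) ≤ K * ε := by
        calc ∑ P : Fin r → Finset (Fin sv),
            (if PairDisj P ∧ S ⊆ P i' then cSpec sv ε P else 0)
            ≤ ∑ _P : Fin r → Finset (Fin sv), ε := by
              refine Finset.sum_le_sum fun P _ => ?_
              split_ifs
              · exact cSpec_le hεpos.le P
              · exact hεpos.le
        _ = K * ε := by
              rw [Finset.sum_const, nsmul_eq_mul, hK, Finset.card_univ]
      have hfinal : t i < t i := by
        calc t i ≤ ∑ P : Fin r → Finset (Fin sv),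
            (if PairDisj P ∧ S ⊆ P i' then c P else 0) := h1
        _ = _ + _ := hsplit
        _ ≤ lam * t i + K * ε := add_le_add hmass hspec
        _ < lam * t i + (1 - lam) * tmin := by
              have := hεK
              linarith [hεK, mul_comm ε K]
        _ ≤ lam * t i + (1 - lam) * t i := by
              have h2 : (0 : ℝ) ≤ 1 - lam := by linarith
              nlinarith [htmin_le i]
        _ = t i := by ring
      exact absurd hfinal (lt_irrefl _)
    · push_neg at hall
      obtain ⟨x, hx⟩ := hall
      have hxr : ∃ y, h x = Sum.inr y := by
        rcases hxy : h x with y | y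
        · rw [hxy] at hx
          exact absurd rfl hx
        · exact ⟨y, rfl⟩
      obtain ⟨y, hy⟩ := hxr
      have hzero : ∀ B : Finset (Fin sv ⊕ Fin k),
          (if Finset.univ.map h ⊆ B then wext (subw c i') (Fin k) B else 0) = 0 := by
        intro B
        split_ifs with hc2
        · rw [wext, dif_neg]
          intro hallB
          have hmem : h x ∈ B := hc2 (Finset.mem_map_of_mem h (Finset.mem_univ x))
          have := hallB _ hmem
          rw [hy] at this
          simp at this
        · rfl
      rw [Finset.sum_congr rfl fun B _ => hzero B, Finset.sum_const_zero] at h1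
      linarith [ht i]
  · -- graph colour case
    set idx : Fin r := ⟨q + (j : ℕ), by have := j.isLt; omega⟩ with hidx
    have hidxeq : Fin.cast (Nat.add_sub_cancel' hqr) (Fin.natAdd q j) = idx := by
      apply Fin.ext
      simp [hidx]
    have hseq : s (Fin.cast (Nat.add_sub_cancel' hqr) (Fin.natAdd q j)) = s idx := by
      rw [hidxeq]
    set sj := s (Fin.cast (Nat.add_sub_cancel' hqr) (Fin.natAdd q j)) with hsj
    have hsjpos : 0 < sj := hs _
    have htj : sj ≤ tN j := htN j
    -- support bound
    have hsupp : ∀ B : Finset (Fin sv), subw c idx B ≠ 0 → B.card < sj := by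
      intro B hB
      obtain ⟨P, hPD, hPi, hcP⟩ := subw_support hB
      have hcases : cPart q sv s w' P ≠ 0 ∨ cSpec sv ε P ≠ 0 := by
        by_contra hcon
        push_neg at hcon
        rw [hc] at hcP
        simp only at hcP
        rw [hcon.1, hcon.2, add_zero] at hcP
        exact hcP rfl
      have hqidx : q ≤ (idx : ℕ) := by rw [hidx]; simp
      rcases hcases with h2 | h2
      · obtain ⟨a, ha, hPa⟩ := cPart_support h2
        have hcards := (mem_partsA.mp hPa).2.2 idx
        have haq := (mem_PiS ha).1 idx hqidx
        rw [hPi] at hcards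
        rw [hseq]
        omega
      · have := cSpec_support h2 idx (by rw [hidx]; simp; omega)
        rw [this] at hPi
        rw [← hPi]
        simpa using hsjpos
    obtain ⟨S, h, hbip, hinj, hnb⟩ := hsub
    set a0 : Fin sj := ⟨0, hsjpos⟩ with ha0def
    set b0 : Fin (tN j) := ⟨0, lt_of_lt_of_le hsjpos htj⟩ with hb0def
    have hadj : (bipAdj (fun (_ : Fin sj) (_ : Fin (tN j)) => True)).Adj
        (Sum.inl a0) (Sum.inr b0) := Or.inl ⟨a0, b0, rfl, rfl, trivial⟩
    have hbip01 := hbip _ _ hadj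
    by_cases hcase : (Sum.inr b0 : Fin sj ⊕ Fin (tN j)) ∈ S
    · have ha0S : (Sum.inl a0 : Fin sj ⊕ Fin (tN j)) ∉ S := fun h' => (hbip01.mp h') hcase
      obtain ⟨B, hBpos, hBmem⟩ := hnb _ ha0S
      have hmemS : ∀ b : Fin (tN j), (Sum.inr b : Fin sj ⊕ Fin (tN j)) ∈ S := by
        intro b
        have hadjb : (bipAdj (fun (_ : Fin sj) (_ : Fin (tN j)) => True)).Adj
            (Sum.inl a0) (Sum.inr b) := Or.inl ⟨a0, b, rfl, rfl, trivial⟩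
        have hiff := hbip _ _ hadjb
        by_contra hb
        exact ha0S (hiff.mpr hb)
      have hmemB : ∀ b : Fin (tN j), h (Sum.inr b) ∈ B := by
        intro b
        exact hBmem _ (hmemS b) (Or.inr ⟨a0, b, rfl, rfl, trivial⟩)
      have hcard : tN j ≤ B.card := by
        have hinj2 : Function.Injective (fun b : Fin (tN j) => h (Sum.inr b)) := by
          intro b1 b2 hb
          have := hinj (hmemS b1) (hmemS b2) hb
          exact Sum.inr_injective this
        calc tN j = (Finset.univ.image (fun b : Fin (tN j) => h (Sum.inr b))).card := by
              rw [Finset.card_image_of_injective _ hinj2, Finset.card_univ, Fintype.card_fin]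
        _ ≤ B.card := by
              refine Finset.card_le_card fun y hy => ?_
              obtain ⟨b, -, rfl⟩ := Finset.mem_image.mp hy
              exact hmemB b
      have hlt := hsupp B hBpos.ne'
      omega
    · obtain ⟨B, hBpos, hBmem⟩ := hnb _ hcase
      have hmemS : ∀ a : Fin sj, (Sum.inl a : Fin sj ⊕ Fin (tN j)) ∈ S := by
        intro a
        have hadja : (bipAdj (fun (_ : Fin sj) (_ : Fin (tN j)) => True)).Adj
            (Sum.inl a) (Sum.inr b0) := Or.inl ⟨a, b0, rfl, rfl, trivial⟩
        exact (hbip _ _ hadja).mpr hcase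
      have hmemB : ∀ a : Fin sj, h (Sum.inl a) ∈ B := by
        intro a
        exact hBmem _ (hmemS a) (Or.inl ⟨a, b0, rfl, rfl, trivial⟩)
      have hcard : sj ≤ B.card := by
        have hinj2 : Function.Injective (fun a : Fin sj => h (Sum.inl a)) := by
          intro a1 a2 hb
          have := hinj (hmemS a1) (hmemS a2) hb
          exact Sum.inl_injective this
        calc sj = (Finset.univ.image (fun a : Fin sj => h (Sum.inl a))).card := by
              rw [Finset.card_image_of_injective _ hinj2, Finset.card_univ, Fintype.card_fin]
        _ ≤ B.card := by
              refine Finset.card_le_card fun y hy => ?_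
              obtain ⟨a, -, rfl⟩ := Finset.mem_image.mp hy
              exact hmemB a
      have hlt := hsupp B hBpos.ne'
      omega
end

section
/- For every integer n ≥ 4 and every integer m ≥ 1, the complete bipartite graph K_{3,m} arrows (K_{2,n}, K_{2,n}) if and only if m ≥ 6n − 5. In particular, K_{3,6n−5} → (K_{2,n},K_{2,n}). -/
open Finset Filter

/-! ### Auxiliary material for Statement 18 -/

private lemma fin2_aux : ∀ a b c : Fin 2, a ≠ b → a ≠ c → b = c := by decide

/-- The six non-constant patterns `Fin 3 → Fin 2`. -/
private def Pat : Fin 6 → Fin 3 → Fin 2 :=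
  ![![0,0,1], ![1,1,0], ![0,1,0], ![1,0,1], ![1,0,0], ![0,1,1]]

private lemma Pat_inj : ∀ q q' : Fin 6, ∀ x y : Fin 3, x ≠ y → ∀ i : Fin 2,
    Pat q x = i → Pat q y = i → Pat q' x = i → Pat q' y = i → q = q' := by decide

private lemma arrows_of_ge (n m : ℕ) (hn : 4 ≤ n) (hm : 6 * n - 5 ≤ m) :
    GArrows (completeBipartiteGraph (Fin 3) (Fin m))
      (fun _ : Fin 2 => completeBipartiteGraph (Fin 2) (Fin n)) := by
  intro c
  set p : Fin m → Fin 3 → Fin 2 := fun v x => c s(Sum.inl x, Sum.inr v) with hp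
  set f : Fin m → Fin 3 × Fin 3 × Fin 2 := fun v =>
    if p v 0 = p v 1 then (0, 1, p v 0)
    else if p v 0 = p v 2 then (0, 2, p v 0)
    else (1, 2, p v 1) with hf
  have hfv : ∀ v, (f v).1 < (f v).2.1 ∧ p v (f v).1 = (f v).2.2 ∧
      p v (f v).2.1 = (f v).2.2 := by
    intro v
    simp only [hf]
    split_ifs with h1 h2
    · exact ⟨(by decide : (0:Fin 3) < 1), rfl, h1.symm⟩
    · exact ⟨(by decide : (0:Fin 3) < 2), rfl, h2.symm⟩
    · exact ⟨(by decide : (1:Fin 3) < 2), rfl, (fin2_aux _ _ _ h1 h2).symm⟩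
  classical
  set t : Finset (Fin 3 × Fin 3 × Fin 2) :=
    Finset.univ.filter (fun z => z.1 < z.2.1) with ht
  have htcard : t.card = 6 := by decide
  obtain ⟨cell, hcellt, hcard⟩ :=
    Finset.exists_lt_card_fiber_of_mul_lt_card_of_maps_to
      (s := (Finset.univ : Finset (Fin m))) (t := t) (f := f) (n := n - 1)
      (fun v _ => by simpa [ht] using (hfv v).1)
      (by simp [htcard]; omega)
  obtain ⟨x, y, i⟩ := cell
  obtain ⟨T, hTsub, hTcard⟩ :=
    Finset.exists_subset_card_eq (s := Finset.univ.filter fun v => f v = (x, y, i)) (n := n) (by omega)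
  set g := T.orderEmbOfFin hTcard with hg
  have hgmem : ∀ k, f (g k) = (x, y, i) := by
    intro k
    have := hTsub (T.orderEmbOfFin_mem hTcard k)
    simpa using this
  have hpg : ∀ k, p (g k) x = i ∧ p (g k) y = i := by
    intro k
    have h1 := (hfv (g k)).2.1
    have h2 := (hfv (g k)).2.2
    rw [hgmem k] at h1 h2
    exact ⟨h1, h2⟩
  have hxy : x ≠ y := by
    have hlt : x < y := by simpa [ht] using hcellt
    exact ne_of_lt hlt
  have hxyinj : Function.Injective (![x, y] : Fin 2 → Fin 3) := by
    intro a b hab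
    fin_cases a <;> fin_cases b <;> simp_all
  refine ⟨i, ⟨Sum.map ![x, y] g, hxyinj.sumMap g.injective⟩, ?_⟩
  rintro (j | k) (j' | k') hadj
  · simp at hadj
  · constructor
    · simp
    · show c s(Sum.inl (![x, y] j), Sum.inr (g k')) = i
      fin_cases j
      · exact (hpg k').1
      · exact (hpg k').2
  · constructor
    · simp
    · show c s(Sum.inr (g k), Sum.inl (![x, y] j')) = i
      rw [Sym2.eq_swap]
      fin_cases j'
      · exact (hpg k).1
      · exact (hpg k).2
  · simp at hadj

private lemma not_arrows_of_lt (n m : ℕ) (hn : 4 ≤ n) (hmlt : m ≤ 6 * n - 6) :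
    ¬ GArrows (completeBipartiteGraph (Fin 3) (Fin m))
      (fun _ : Fin 2 => completeBipartiteGraph (Fin 2) (Fin n)) := by
  have hn1 : 0 < n - 1 := by omega
  set idx : Fin m → Fin 6 := fun v => ⟨v / (n - 1), by
    have hv := v.isLt
    rw [Nat.div_lt_iff_lt_mul hn1]
    omega⟩ with hidx
  set d : (Fin 3 ⊕ Fin m) → (Fin 3 ⊕ Fin m) → Fin 2 := fun a b =>
    match a, b with
    | Sum.inl x, Sum.inr v => Pat (idx v) x
    | Sum.inr v, Sum.inl x => Pat (idx v) x
    | _, _ => 0 with hd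
  have hdsymm : ∀ a b, d a b = d b a := by
    rintro (x | v) (y | w) <;> rfl
  intro hA
  obtain ⟨i, φ, h⟩ := hA (Sym2.lift ⟨d, hdsymm⟩)
  -- the two vertices of the small side map into `Fin 3`
  have hleft : ∀ j : Fin 2, ∃ x : Fin 3, φ (Sum.inl j) = Sum.inl x := by
    intro j
    by_contra hc
    push_neg at hc
    obtain ⟨w, hw⟩ : ∃ w : Fin m, φ (Sum.inl j) = Sum.inr w := by
      rcases hφ : φ (Sum.inl j) with x | w
      · exact absurd hφ (hc x)
      · exact ⟨w, rfl⟩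
    have hψ : ∀ k : Fin n, ∃ x : Fin 3, φ (Sum.inr k) = Sum.inl x := by
      intro k
      have hadj : (completeBipartiteGraph (Fin 2) (Fin n)).Adj (Sum.inl j) (Sum.inr k) := by
        simp
      have := (h _ _ hadj).1
      rw [hw] at this
      rcases hφ2 : φ (Sum.inr k) with x | w'
      · exact ⟨x, rfl⟩
      · rw [hφ2] at this; simp at this
    choose ψ hψ' using hψ
    have hψinj : Function.Injective ψ := by
      intro k k' hkk'
      have : φ (Sum.inr k) = φ (Sum.inr k') := by rw [hψ' k, hψ' k', hkk']
      simpa using φ.injective this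
    have := Fintype.card_le_of_injective ψ hψinj
    simp at this
    omega
  obtain ⟨x, hx⟩ := hleft 0
  obtain ⟨y, hy⟩ := hleft 1
  have hxy : x ≠ y := by
    intro hxyeq
    have : φ (Sum.inl 0) = φ (Sum.inl 1) := by rw [hx, hy, hxyeq]
    simpa using φ.injective this
  -- the vertices of the big side map into `Fin m`
  have hright : ∀ k : Fin n, ∃ v : Fin m, φ (Sum.inr k) = Sum.inr v := by
    intro k
    have hadj : (completeBipartiteGraph (Fin 2) (Fin n)).Adj (Sum.inl 0) (Sum.inr k) := by
      simp
    have := (h _ _ hadj).1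
    rw [hx] at this
    rcases hφ2 : φ (Sum.inr k) with x' | v
    · rw [hφ2] at this; simp at this
    · exact ⟨v, rfl⟩
  choose v hv using hright
  have k0 : Fin n := ⟨0, by omega⟩
  have hvinj : Function.Injective v := by
    intro k k' hkk'
    have : φ (Sum.inr k) = φ (Sum.inr k') := by rw [hv k, hv k', hkk']
    simpa using φ.injective this
  -- colours
  have hcol : ∀ k : Fin n, Pat (idx (v k)) x = i ∧ Pat (idx (v k)) y = i := by
    intro k
    have hadj0 : (completeBipartiteGraph (Fin 2) (Fin n)).Adj (Sum.inl 0) (Sum.inr k) := by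
      simp
    have hadj1 : (completeBipartiteGraph (Fin 2) (Fin n)).Adj (Sum.inl 1) (Sum.inr k) := by
      simp
    have h0 := (h _ _ hadj0).2
    have h1 := (h _ _ hadj1).2
    rw [hx, hv] at h0
    rw [hy, hv] at h1
    exact ⟨h0, h1⟩
  -- all images lie in the same block
  have hsame : ∀ k : Fin n, idx (v k) = idx (v k0) := by
    intro k
    exact Pat_inj _ _ x y hxy i (hcol k).1 (hcol k).2 (hcol k0).1 (hcol k0).2
  set q0 : ℕ := (idx (v k0) : ℕ) with hq0
  have hmem : ∀ k : Fin n, (v k : ℕ) ∈ Finset.Ico (q0 * (n - 1)) (q0 * (n - 1) + (n - 1)) := by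
    intro k
    have hdiv : (v k : ℕ) / (n - 1) = q0 := by
      have := hsame k
      rw [hidx] at this
      simpa [hq0, hidx] using congrArg Fin.val this
    rw [Finset.mem_Ico]
    constructor
    · calc q0 * (n - 1) = (v k : ℕ) / (n - 1) * (n - 1) := by rw [hdiv]
        _ ≤ (v k : ℕ) := Nat.div_mul_le_self _ _
    · have : (v k : ℕ) / (n - 1) < q0 + 1 := by omega
      rw [Nat.div_lt_iff_lt_mul hn1] at this
      have hexp : (q0 + 1) * (n - 1) = q0 * (n - 1) + (n - 1) := by ring
      omega
  have hcard := Finset.card_le_card_of_injOn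
    (s := (Finset.univ : Finset (Fin n)))
    (t := Finset.Ico (q0 * (n - 1)) (q0 * (n - 1) + (n - 1)))
    (fun k => (v k : ℕ))
    (fun k _ => hmem k) (fun a _ b _ hab => hvinj (Fin.val_injective hab))
  simp [Nat.card_Ico] at hcard
  omega

/-- For `n ≥ 4` and `m ≥ 1`, `K_{3,m} → (K_{2,n},K_{2,n})` iff
`m ≥ 6n − 5`; in particular `K_{3,6n−5} → (K_{2,n},K_{2,n})`. -/
theorem stmt_18 (n : ℕ) (hn : 4 ≤ n) (m : ℕ) (hm : 1 ≤ m) :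
    (GArrows (completeBipartiteGraph (Fin 3) (Fin m))
        (fun _ : Fin 2 => completeBipartiteGraph (Fin 2) (Fin n)) ↔ 6 * n - 5 ≤ m) ∧
    GArrows (completeBipartiteGraph (Fin 3) (Fin (6 * n - 5)))
        (fun _ : Fin 2 => completeBipartiteGraph (Fin 2) (Fin n)) := by
  refine ⟨⟨fun hA => ?_, fun hge => arrows_of_ge n m hn hge⟩,
    arrows_of_ge n (6 * n - 5) hn le_rfl⟩
  by_contra hlt
  exact not_arrows_of_lt n m hn (by omega) hA
end
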